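/- arXiv:1805.11940 — 2 statements merged into one kernel-verified Lean document; each statement's English description precedes it below -/
import Mathlib

section
/- Let f ∈ S_d and let X be a minimal apolar set of f. If d ≥ ρ(X), then (I_X)_k = f^⊥_k for every integer k with 0 ≤ k ≤ d − ρ(X), where (I_X)_k denotes the degree-k graded piece of I_X. -/
noncomputable section

open MvPolynomial

/-- The iterated partial-derivative operator `∂^α` acting on polynomials. -/
def diffOp {n : ℕ} (α : Fin n →₀ ℕ) (f : MvPolynomial (Fin n) ℂ) :
    MvPolynomial (Fin n) ℂ :=
  (List.finRange n).foldr (fun i h => (⇑(pderiv (R := ℂ) i))^[α i] h) f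

/-- The apolar action `G ∘ f` of the dual polynomial ring `T` on `S`. -/
def apolar {n : ℕ} (G f : MvPolynomial (Fin n) ℂ) : MvPolynomial (Fin n) ℂ :=
  ∑ α ∈ G.support, G.coeff α • diffOp α f

lemma apolar_eq_sum_subset {n : ℕ} (G f : MvPolynomial (Fin n) ℂ) (s : Finset (Fin n →₀ ℕ))
    (hs : G.support ⊆ s) : apolar G f = ∑ α ∈ s, G.coeff α • diffOp α f :=
  Finset.sum_subset hs fun x _ hx => by
    rw [MvPolynomial.notMem_support_iff.mp hx, zero_smul]

lemma apolar_zero {n : ℕ} (f : MvPolynomial (Fin n) ℂ) : apolar 0 f = 0 := by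
  simp [apolar]

lemma apolar_add {n : ℕ} (G G' f : MvPolynomial (Fin n) ℂ) :
    apolar (G + G') f = apolar G f + apolar G' f := by
  classical
  rw [apolar_eq_sum_subset (G + G') f (G.support ∪ G'.support) (MvPolynomial.support_add),
    apolar_eq_sum_subset G f (G.support ∪ G'.support) Finset.subset_union_left,
    apolar_eq_sum_subset G' f (G.support ∪ G'.support) Finset.subset_union_right,
    ← Finset.sum_add_distrib]
  exact Finset.sum_congr rfl fun α _ => by rw [coeff_add, add_smul]

lemma apolar_smul {n : ℕ} (c : ℂ) (G f : MvPolynomial (Fin n) ℂ) :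
    apolar (c • G) f = c • apolar G f := by
  rw [apolar_eq_sum_subset (c • G) f G.support MvPolynomial.support_smul, apolar,
    Finset.smul_sum]
  exact Finset.sum_congr rfl fun α _ => by rw [coeff_smul, smul_assoc]

/-- The apolar ideal `f^⊥`, as a set: all `G` with `G ∘ f = 0`. -/
def perpSet {n : ℕ} (f : MvPolynomial (Fin n) ℂ) : Set (MvPolynomial (Fin n) ℂ) :=
  {G | apolar G f = 0}

/-- The degree-`k` graded piece `f^⊥_k` of the apolar ideal, as a `ℂ`-submodule. -/
def perpSub {n : ℕ} (f : MvPolynomial (Fin n) ℂ) (k : ℕ) :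
    Submodule ℂ (MvPolynomial (Fin n) ℂ) where
  carrier := {G | G.IsHomogeneous k ∧ apolar G f = 0}
  zero_mem' := ⟨isHomogeneous_zero _ _ _, apolar_zero f⟩
  add_mem' := fun ha hb => ⟨ha.1.add hb.1, by rw [apolar_add, ha.2, hb.2, add_zero]⟩
  smul_mem' := fun c G hG =>
    ⟨by rw [smul_eq_C_mul]; simpa using (isHomogeneous_C _ c).mul hG.1,
     by rw [apolar_smul, hG.2, smul_zero]⟩

/-- The degree-`k` graded piece `f^⊥_k` of the apolar ideal, as a set. -/
def perpPiece {n : ℕ} (f : MvPolynomial (Fin n) ℂ) (k : ℕ) :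
    Set (MvPolynomial (Fin n) ℂ) := (perpSub f k : Set _)

/-- Hilbert function of the apolar algebra `A_f = T/f^⊥` in degree `k`:
`HF_{A_f}(k) = dim T_k − dim f^⊥_k`. -/
def HF {n : ℕ} (f : MvPolynomial (Fin n) ℂ) (k : ℕ) : ℕ :=
  Module.finrank ℂ (homogeneousSubmodule (Fin n) ℂ k) - Module.finrank ℂ (perpSub f k)

/-- The differential length `ℓ(f) = max_k HF_{A_f}(k)`. -/
def ell {n : ℕ} (f : MvPolynomial (Fin n) ℂ) : ℕ := sSup (Set.range (HF f))

/-- Complex projective `n`-space `ℙ^n(ℂ)`. -/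
abbrev Pt (n : ℕ) := Projectivization ℂ (Fin (n + 1) → ℂ)

/-- Degree-`k` graded piece of an ideal, as a set. -/
def idealPiece {n : ℕ} (I : Ideal (MvPolynomial (Fin n) ℂ)) (k : ℕ) :
    Set (MvPolynomial (Fin n) ℂ) := {G | G.IsHomogeneous k ∧ G ∈ I}

/-- The homogeneous vanishing ideal `I_X` of a set of projective points. -/
def vanishingIdeal {n : ℕ} (A : Set (Pt n)) : Ideal (MvPolynomial (Fin (n + 1)) ℂ) :=
  Ideal.span {G | (∃ k, G.IsHomogeneous k) ∧ ∀ p ∈ A, eval p.rep G = 0}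

/-- The linear form with coefficient vector `a`. -/
def lin {n : ℕ} (a : Fin (n + 1) → ℂ) : MvPolynomial (Fin (n + 1)) ℂ :=
  ∑ i, C (a i) * X i

/-- The linear form `ℓ_ξ` attached to a projective point `ξ`. -/
def linOf {n : ℕ} (p : Pt n) : MvPolynomial (Fin (n + 1)) ℂ := lin p.rep

/-- Waring rank: the least `r` such that `f` is a sum of `r` `d`-th powers of linear forms. -/
def wrank {n : ℕ} (d : ℕ) (f : MvPolynomial (Fin (n + 1)) ℂ) : ℕ :=
  sInf {r | ∃ a : Fin r → (Fin (n + 1) → ℂ), f = ∑ i, lin (a i) ^ d}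

/-- `A` is apolar to `f`, i.e. `I_A ⊆ f^⊥`. -/
def isApolar {n : ℕ} (f : MvPolynomial (Fin (n + 1)) ℂ) (A : Set (Pt n)) : Prop :=
  ∀ G ∈ vanishingIdeal A, apolar G f = 0

/-- `A` is a minimal apolar set of `f ∈ S_d`: a finite apolar set of cardinality `rk f`. -/
def isMinApolar {n : ℕ} (d : ℕ) (f : MvPolynomial (Fin (n + 1)) ℂ) (A : Set (Pt n)) : Prop :=
  A.Finite ∧ isApolar f A ∧ A.ncard = wrank d f

/-- The Waring locus of `f`: points belonging to some minimal apolar set. -/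
def waringLocus {n : ℕ} (d : ℕ) (f : MvPolynomial (Fin (n + 1)) ℂ) : Set (Pt n) :=
  {p | ∃ A, isMinApolar d f A ∧ p ∈ A}

open Classical in
/-- The regularity (interpolation degree) `ρ(A)` of a set of points: the least `k` admitting
degree-`k` interpolation forms `U_p` with `U_p(q) = δ_{pq}`. -/
def interpReg {n : ℕ} (A : Set (Pt n)) : ℕ :=
  sInf {k | ∃ U : Pt n → MvPolynomial (Fin (n + 1)) ℂ,
    ∀ p ∈ A, (U p).IsHomogeneous k ∧ ∀ q ∈ A, eval q.rep (U p) = if q = p then 1 else 0}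

/-- Zero locus in projective space of a set of (homogeneous) polynomials. -/
def zeroLocus {n : ℕ} (S : Set (MvPolynomial (Fin (n + 1)) ℂ)) : Set (Pt n) :=
  {p | ∀ G ∈ S, eval p.rep G = 0}

/-- `W` is Zariski dense in `Z`: every homogeneous form vanishing on `W` vanishes on `Z`. -/
def denseIn {n : ℕ} (W Z : Set (Pt n)) : Prop :=
  ∀ G : MvPolynomial (Fin (n + 1)) ℂ, (∃ k, G.IsHomogeneous k) →
    (∀ p ∈ W, eval p.rep G = 0) → ∀ p ∈ Z, eval p.rep G = 0

/-- The coordinate point with `1` in position `i` and `0` elsewhere. -/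
def basePt (n : ℕ) (i : Fin (n + 1)) : Pt n :=
  Projectivization.mk ℂ (Pi.single i 1) (by
    intro h
    have := congrFun h i
    simp at this)

/-- Three projective points are collinear: their representatives are linearly dependent. -/
def collin3 {n : ℕ} (p q r : Pt n) : Prop := ¬ LinearIndependent ℂ ![p.rep, q.rep, r.rep]

/-- A Zariski-closed subset of `ℙ^n`: the common zero locus of a family of homogeneous forms. -/
def zClosed {n : ℕ} (Z : Set (Pt n)) : Prop :=
  ∃ S : Set (MvPolynomial (Fin (n + 1)) ℂ),
    (∀ G ∈ S, ∃ k, G.IsHomogeneous k) ∧ Z = zeroLocus S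

/-- `W` is Zariski dense in `Z`: every Zariski-closed set containing `W` contains `Z`. -/
def zDense {n : ℕ} (W Z : Set (Pt n)) : Prop :=
  ∀ Zc : Set (Pt n), zClosed Zc → W ⊆ Zc → Z ⊆ Zc

/-- An irreducible Zariski-closed set: nonempty and not the union of two proper closed
subsets of itself. -/
def zIrred {n : ℕ} (Z : Set (Pt n)) : Prop :=
  Z.Nonempty ∧ ∀ Z₁ Z₂ : Set (Pt n), zClosed Z₁ → zClosed Z₂ → Z₁ ⊆ Z → Z₂ ⊆ Z →
    Z = Z₁ ∪ Z₂ → Z₁ = Z ∨ Z₂ = Z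

/-- `P` lies in the projective linear span of `r` points of `Xv`. -/
def xRankLe {n : ℕ} (Xv : Set (Pt n)) (P : Pt n) (r : ℕ) : Prop :=
  ∃ Q : Fin r → Pt n, (∀ i, Q i ∈ Xv) ∧
    P.rep ∈ Submodule.span ℂ (Set.range fun i => (Q i).rep)

/-- The `X`-rank of a point `P` (with value `+∞` if `P` is in no finite span). -/
def xRank {n : ℕ} (Xv : Set (Pt n)) (P : Pt n) : ℕ∞ :=
  sInf {r : ℕ∞ | ∃ m : ℕ, r = (m : ℕ∞) ∧ xRankLe Xv P m}

/-- `Xv` spans `ℙ^n`: every point is in the span of finitely many points of `Xv`. -/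
def spansAll {n : ℕ} (Xv : Set (Pt n)) : Prop := ∀ P : Pt n, ∃ m, xRankLe Xv P m

/-- The generic `X`-rank: the least `r` such that points of `X`-rank `≤ r` are dense. -/
def genXRank {n : ℕ} (Xv : Set (Pt n)) : ℕ :=
  sInf {m : ℕ | zDense {P | xRankLe Xv P m} Set.univ}

/-- The `X`-decomposition locus of `P`, where `r = rk_X(P)`. -/
def decompLocus {n : ℕ} (Xv : Set (Pt n)) (P : Pt n) (r : ℕ) : Set (Pt n) :=
  {Q | Q ∈ Xv ∧ ∃ Q' : Fin (r - 1) → Pt n, (∀ i, Q' i ∈ Xv) ∧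
    P.rep ∈ Submodule.span ℂ (insert Q.rep (Set.range fun i => (Q' i).rep))}

/-- Zariski density in the affine space `ℂ^ι`: every polynomial function vanishing on `W`
vanishes on `Z`. -/
def zDenseAff {ι : Type} (W Z : Set (ι → ℂ)) : Prop :=
  ∀ P : MvPolynomial ι ℂ, (∀ w ∈ W, MvPolynomial.eval w P = 0) →
    ∀ z ∈ Z, MvPolynomial.eval z P = 0

/-- The generic Waring rank of degree-`d` forms in `n+1` variables: the least `r` such that
forms of rank `≤ r` are Zariski dense in `S_d` (viewed in coefficient space). -/
def genWaringRank (n d : ℕ) : ℕ :=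
  sInf {r : ℕ | zDenseAff
    {φ : (Fin (n + 1) →₀ ℕ) → ℂ | ∃ f : MvPolynomial (Fin (n + 1)) ℂ,
      f.IsHomogeneous d ∧ wrank d f ≤ r ∧ φ = fun m => coeff m f}
    {φ : (Fin (n + 1) →₀ ℕ) → ℂ | ∃ f : MvPolynomial (Fin (n + 1)) ℂ,
      f.IsHomogeneous d ∧ φ = fun m => coeff m f}}


section AuxProof

lemma iter_pderiv_add {n : ℕ} (i : Fin n) (m : ℕ) (f g : MvPolynomial (Fin n) ℂ) :
    (⇑(pderiv (R := ℂ) i))^[m] (f + g) =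
      (⇑(pderiv (R := ℂ) i))^[m] f + (⇑(pderiv (R := ℂ) i))^[m] g := by
  induction m generalizing f g with
  | zero => simp
  | succ m ih => simp [Function.iterate_succ_apply, map_add, ih]

lemma iter_pderiv_smul {n : ℕ} (i : Fin n) (m : ℕ) (c : ℂ) (f : MvPolynomial (Fin n) ℂ) :
    (⇑(pderiv (R := ℂ) i))^[m] (c • f) = c • (⇑(pderiv (R := ℂ) i))^[m] f := by
  induction m generalizing f with
  | zero => simp
  | succ m ih => simp [Function.iterate_succ_apply, map_smul, ih]

lemma diffOp_add {n : ℕ} (α : Fin n →₀ ℕ) (f g : MvPolynomial (Fin n) ℂ) :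
    diffOp α (f + g) = diffOp α f + diffOp α g := by
  unfold diffOp
  induction (List.finRange n) with
  | nil => simp
  | cons i L ih => simp [List.foldr_cons, ih, iter_pderiv_add]

lemma diffOp_smul {n : ℕ} (α : Fin n →₀ ℕ) (c : ℂ) (f : MvPolynomial (Fin n) ℂ) :
    diffOp α (c • f) = c • diffOp α f := by
  unfold diffOp
  induction (List.finRange n) with
  | nil => simp
  | cons i L ih => simp [List.foldr_cons, ih, iter_pderiv_smul]

lemma diffOp_zero_right {n : ℕ} (α : Fin n →₀ ℕ) : diffOp α (0 : MvPolynomial (Fin n) ℂ) = 0 := by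
  have := diffOp_smul α 0 (0 : MvPolynomial (Fin n) ℂ)
  simpa using this

lemma diffOp_zero_left {n : ℕ} (f : MvPolynomial (Fin n) ℂ) : diffOp (0 : Fin n →₀ ℕ) f = f := by
  unfold diffOp
  induction (List.finRange n) with
  | nil => simp
  | cons i L ih => simp [List.foldr_cons, ih]

lemma iter_pderiv_monomial {n : ℕ} (i : Fin n) (m : ℕ) (γ : Fin n →₀ ℕ) (c : ℂ) :
    (⇑(pderiv (R := ℂ) i))^[m] (monomial γ c) =
      monomial (γ - Finsupp.single i m) (c * ((γ i).descFactorial m : ℂ)) := by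
  induction m with
  | zero => simp
  | succ m ih =>
      rw [Function.iterate_succ_apply', ih, pderiv_monomial]
      congr 1
      · rw [tsub_tsub, ← Finsupp.single_add]
      · have : (γ - Finsupp.single i m) i = γ i - m := by
          simp [Finsupp.tsub_apply]
        rw [this, Nat.descFactorial_succ]
        push_cast [mul_assoc]
        ring

lemma foldr_single_apply {n : ℕ} (α : Fin n →₀ ℕ) (L : List (Fin n)) (i : Fin n) (hi : i ∉ L) :
    (L.foldr (fun j s => Finsupp.single j (α j) + s) 0) i = 0 := by
  induction L with
  | nil => simp
  | cons j L ih =>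
      simp only [List.foldr_cons, Finsupp.add_apply]
      rw [ih (fun h => hi (List.mem_cons_of_mem _ h)), Finsupp.single_apply]
      simp [Ne.symm (List.ne_of_not_mem_cons hi)]

lemma foldr_diffOp_monomial {n : ℕ} (α : Fin n →₀ ℕ) (L : List (Fin n)) (hL : L.Nodup)
    (γ : Fin n →₀ ℕ) (c : ℂ) :
    L.foldr (fun i h => (⇑(pderiv (R := ℂ) i))^[α i] h) (monomial γ c) =
      monomial (γ - L.foldr (fun j s => Finsupp.single j (α j) + s) 0)
        (c * (L.map (fun i => ((γ i).descFactorial (α i) : ℂ))).prod) := by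
  induction L with
  | nil => simp
  | cons i L ih =>
      have hiL : i ∉ L := (List.nodup_cons.mp hL).1
      rw [List.foldr_cons, ih (List.nodup_cons.mp hL).2, iter_pderiv_monomial]
      congr 1
      · rw [List.foldr_cons, tsub_tsub, add_comm (Finsupp.single i (α i))]
      · have h0 : (L.foldr (fun j s => Finsupp.single j (α j) + s) 0) i = 0 :=
          foldr_single_apply α L i hiL
        have : (γ - L.foldr (fun j s => Finsupp.single j (α j) + s) 0) i = γ i := by
          simp [Finsupp.tsub_apply, h0]
        rw [this, List.map_cons, List.prod_cons]
        ring

lemma diffOp_monomial {n : ℕ} (α γ : Fin n →₀ ℕ) (c : ℂ) :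
    diffOp α (monomial γ c) =
      monomial (γ - α) (c * ∏ i, ((γ i).descFactorial (α i) : ℂ)) := by
  unfold diffOp
  rw [foldr_diffOp_monomial α _ (List.nodup_finRange n)]
  congr 1
  · congr 1
    rw [show (List.finRange n).foldr (fun j s => Finsupp.single j (α j) + s) 0 =
        ((List.finRange n).map (fun j => Finsupp.single j (α j))).foldr (· + ·) 0 from
        List.foldr_map.symm,
      ← List.sum_eq_foldr, ← Fin.sum_univ_def, Finsupp.univ_sum_single]

lemma apolar_add_right {n : ℕ} (G f g : MvPolynomial (Fin n) ℂ) :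
    apolar G (f + g) = apolar G f + apolar G g := by
  unfold apolar
  rw [← Finset.sum_add_distrib]
  exact Finset.sum_congr rfl fun α _ => by rw [diffOp_add, smul_add]

lemma apolar_smul_right {n : ℕ} (c : ℂ) (G f : MvPolynomial (Fin n) ℂ) :
    apolar G (c • f) = c • apolar G f := by
  unfold apolar
  rw [Finset.smul_sum]
  exact Finset.sum_congr rfl fun α _ => by rw [diffOp_smul, smul_comm]

lemma apolar_zero_right {n : ℕ} (G : MvPolynomial (Fin n) ℂ) : apolar G 0 = 0 := by
  unfold apolar
  exact Finset.sum_eq_zero fun α _ => by rw [diffOp_zero_right, smul_zero]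

lemma apolar_sub_right {n : ℕ} (G f g : MvPolynomial (Fin n) ℂ) :
    apolar G (f - g) = apolar G f - apolar G g := by
  have := apolar_add_right G (f - g) g
  rw [sub_add_cancel] at this
  rw [this]; ring

lemma apolar_sum_right {n : ℕ} {ι : Type*} (s : Finset ι) (G : MvPolynomial (Fin n) ℂ)
    (F : ι → MvPolynomial (Fin n) ℂ) :
    apolar G (∑ i ∈ s, F i) = ∑ i ∈ s, apolar G (F i) := by
  classical
  induction s using Finset.induction with
  | empty => simp [apolar_zero_right]
  | insert _ _ hx ih => rw [Finset.sum_insert hx, Finset.sum_insert hx, apolar_add_right, ih]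

lemma apolar_sub_left {n : ℕ} (G H f : MvPolynomial (Fin n) ℂ) :
    apolar (G - H) f = apolar G f - apolar H f := by
  have := apolar_add (G - H) H f
  rw [sub_add_cancel] at this
  rw [this]; ring

lemma apolar_sum_left {n : ℕ} {ι : Type*} (s : Finset ι) (F : ι → MvPolynomial (Fin n) ℂ)
    (f : MvPolynomial (Fin n) ℂ) :
    apolar (∑ i ∈ s, F i) f = ∑ i ∈ s, apolar (F i) f := by
  classical
  induction s using Finset.induction with
  | empty => simp [apolar_zero]
  | insert _ _ hx ih => rw [Finset.sum_insert hx, Finset.sum_insert hx, apolar_add, ih]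

lemma apolar_monomial {n : ℕ} (α : Fin n →₀ ℕ) (a : ℂ) (f : MvPolynomial (Fin n) ℂ) :
    apolar (MvPolynomial.monomial α a) f = a • diffOp α f := by
  by_cases ha : a = 0
  · simp [ha, apolar_zero]
  · unfold apolar
    rw [MvPolynomial.support_monomial, if_neg ha, Finset.sum_singleton,
      MvPolynomial.coeff_monomial, if_pos rfl]

lemma apolar_one {n : ℕ} (f : MvPolynomial (Fin n) ℂ) : apolar 1 f = f := by
  have h1 : (1 : MvPolynomial (Fin n) ℂ) = MvPolynomial.monomial 0 1 := by
    simp [MvPolynomial.monomial_zero']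
  rw [h1, apolar_monomial, diffOp_zero_left, one_smul]

lemma descFactorial_add' (g b a : ℕ) :
    g.descFactorial (b + a) = g.descFactorial b * (g - b).descFactorial a := by
  induction a with
  | zero => simp
  | succ a ih =>
      rw [← Nat.add_assoc, Nat.descFactorial_succ, ih, Nat.descFactorial_succ,
        Nat.sub_sub]
      ring

lemma diffOp_comp {n : ℕ} (α β : Fin n →₀ ℕ) (f : MvPolynomial (Fin n) ℂ) :
    diffOp α (diffOp β f) = diffOp (α + β) f := by
  induction f using MvPolynomial.induction_on' with
  | add p q hp hq => rw [diffOp_add, diffOp_add, diffOp_add, hp, hq]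
  | monomial γ c =>
      rw [diffOp_monomial, diffOp_monomial, diffOp_monomial, tsub_tsub, add_comm β α]
      congr 1
      rw [mul_assoc]
      congr 1
      rw [← Finset.prod_mul_distrib]
      apply Finset.prod_congr rfl
      intro i _
      rw [Finsupp.tsub_apply, Finsupp.add_apply, add_comm (α i) (β i), ← Nat.cast_mul,
        ← descFactorial_add' (γ i) (β i) (α i)]

lemma apolar_mul {n : ℕ} (H G f : MvPolynomial (Fin n) ℂ) :
    apolar (H * G) f = apolar H (apolar G f) := by
  induction H using MvPolynomial.induction_on' with
  | add p q hp hq => rw [add_mul, apolar_add, apolar_add, hp, hq]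
  | monomial α a =>
      induction G using MvPolynomial.induction_on' with
      | add p q hp hq => rw [mul_add, apolar_add, hp, hq, apolar_add, ← apolar_add_right]
      | monomial β b =>
          rw [MvPolynomial.monomial_mul, apolar_monomial, apolar_monomial, apolar_monomial,
            diffOp_smul, diffOp_comp, mul_smul]


open MvPolynomial in
lemma coeff0_diffOp {n : ℕ} (α : Fin n →₀ ℕ) (h : MvPolynomial (Fin n) ℂ) :
    MvPolynomial.coeff 0 (diffOp α h) = (∏ i, ((α i).factorial : ℂ)) * MvPolynomial.coeff α h := by
  induction h using MvPolynomial.induction_on' with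
  | add p q hp hq => rw [diffOp_add, MvPolynomial.coeff_add, hp, hq, MvPolynomial.coeff_add]; ring
  | monomial γ c =>
      rw [diffOp_monomial, MvPolynomial.coeff_monomial, MvPolynomial.coeff_monomial]
      by_cases hγ : γ = α
      · subst hγ
        rw [if_pos (by simp), if_pos rfl]
        simp [Nat.descFactorial_self, mul_comm]
      · rw [if_neg hγ, mul_zero]
        by_cases hle : γ - α = 0
        · rw [if_pos hle]
          have hle' : γ ≤ α := tsub_eq_zero_iff_le.mp hle
          obtain ⟨i, hi⟩ : ∃ i, γ i < α i := by
            by_contra hc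
            push_neg at hc
            exact hγ (le_antisymm hle' (Finsupp.le_def.mpr hc))
          have : ((γ i).descFactorial (α i) : ℂ) = 0 := by
            rw [Nat.descFactorial_eq_zero_iff_lt.mpr hi, Nat.cast_zero]
          rw [Finset.prod_eq_zero (Finset.mem_univ i) this, mul_zero]
        · rw [if_neg hle]

def pairP {n : ℕ} (G h : MvPolynomial (Fin n) ℂ) : ℂ :=
  MvPolynomial.coeff 0 (apolar G h)

lemma pairP_eq_sum {n : ℕ} (G h : MvPolynomial (Fin n) ℂ) :
    pairP G h = ∑ α ∈ G.support,
      (∏ i, ((α i).factorial : ℂ)) * MvPolynomial.coeff α G * MvPolynomial.coeff α h := by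
  unfold pairP apolar
  rw [MvPolynomial.coeff_sum]
  exact Finset.sum_congr rfl fun α _ => by
    rw [MvPolynomial.coeff_smul, coeff0_diffOp, smul_eq_mul]; ring

lemma pairP_eq_sum_subset {n : ℕ} (G h : MvPolynomial (Fin n) ℂ) (s : Finset (Fin n →₀ ℕ))
    (hs : G.support ⊆ s) :
    pairP G h = ∑ α ∈ s,
      (∏ i, ((α i).factorial : ℂ)) * MvPolynomial.coeff α G * MvPolynomial.coeff α h := by
  rw [pairP_eq_sum]
  exact Finset.sum_subset hs fun x _ hx => by
    rw [MvPolynomial.notMem_support_iff.mp hx, mul_zero, zero_mul]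

lemma pairP_symm {n : ℕ} (G h : MvPolynomial (Fin n) ℂ) : pairP G h = pairP h G := by
  classical
  rw [pairP_eq_sum_subset G h (G.support ∪ h.support) Finset.subset_union_left,
    pairP_eq_sum_subset h G (G.support ∪ h.support) Finset.subset_union_right]
  exact Finset.sum_congr rfl fun α _ => by ring

lemma pairP_monomial_one {n : ℕ} (α : Fin n →₀ ℕ) (h : MvPolynomial (Fin n) ℂ) :
    pairP (MvPolynomial.monomial α 1) h
      = (∏ i, ((α i).factorial : ℂ)) * MvPolynomial.coeff α h := by
  unfold pairP
  rw [apolar_monomial, one_smul, coeff0_diffOp]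

lemma pairP_sub_right {n : ℕ} (G f g : MvPolynomial (Fin n) ℂ) :
    pairP G (f - g) = pairP G f - pairP G g := by
  unfold pairP
  rw [apolar_sub_right, MvPolynomial.coeff_sub]

lemma pairP_smul_right {n : ℕ} (c : ℂ) (G f : MvPolynomial (Fin n) ℂ) :
    pairP G (c • f) = c * pairP G f := by
  unfold pairP
  rw [apolar_smul_right, MvPolynomial.coeff_smul, smul_eq_mul]

lemma pairP_sum_right {n : ℕ} {ι : Type*} (s : Finset ι) (G : MvPolynomial (Fin n) ℂ)
    (F : ι → MvPolynomial (Fin n) ℂ) :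
    pairP G (∑ i ∈ s, F i) = ∑ i ∈ s, pairP G (F i) := by
  unfold pairP
  rw [apolar_sum_right, MvPolynomial.coeff_sum]

lemma pairP_sum_left {n : ℕ} {ι : Type*} (s : Finset ι) (F : ι → MvPolynomial (Fin n) ℂ)
    (f : MvPolynomial (Fin n) ℂ) :
    pairP (∑ i ∈ s, F i) f = ∑ i ∈ s, pairP (F i) f := by
  unfold pairP
  rw [apolar_sum_left, MvPolynomial.coeff_sum]

lemma pairP_sub_left {n : ℕ} (G H f : MvPolynomial (Fin n) ℂ) :
    pairP (G - H) f = pairP G f - pairP H f := by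
  unfold pairP
  rw [apolar_sub_left, MvPolynomial.coeff_sub]

lemma pairP_smul_left {n : ℕ} (c : ℂ) (G f : MvPolynomial (Fin n) ℂ) :
    pairP (c • G) f = c * pairP G f := by
  unfold pairP
  rw [apolar_smul, MvPolynomial.coeff_smul, smul_eq_mul]

lemma lin_isHomogeneous {n : ℕ} (a : Fin (n + 1) → ℂ) : (lin a).IsHomogeneous 1 :=
  IsHomogeneous.sum _ _ _ fun i _ => by
    simpa using (isHomogeneous_C _ (a i)).mul (isHomogeneous_X _ i)

lemma eval_lin {n : ℕ} (v a : Fin (n + 1) → ℂ) : eval v (lin a) = ∑ i, a i * v i := by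
  simp [lin]

lemma lin_smul {n : ℕ} (t : ℂ) (a : Fin (n + 1) → ℂ) : lin (t • a) = C t * lin a := by
  simp only [lin, Finset.mul_sum, Pi.smul_apply, smul_eq_mul, map_mul, mul_assoc]

lemma pderiv_lin_pow {n : ℕ} (i : Fin (n + 1)) (a : Fin (n + 1) → ℂ) (m : ℕ) :
    pderiv (R := ℂ) i (lin a ^ m) = C ((m : ℂ) * a i) * lin a ^ (m - 1) := by
  have hder : pderiv (R := ℂ) i (lin a) = C (a i) := by
    unfold lin
    rw [map_sum]
    rw [Finset.sum_eq_single i]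
    · rw [pderiv_C_mul, pderiv_X, Pi.single_eq_same, mul_one]
    · intro j _ hji
      rw [pderiv_C_mul, pderiv_X, Pi.single_eq_of_ne hji, mul_zero]
    · simp
  rw [pderiv_pow, hder, map_mul, map_natCast]
  ring

lemma iter_pderiv_lin_pow {n : ℕ} (i : Fin (n + 1)) (a : Fin (n + 1) → ℂ) (m t : ℕ) :
    (⇑(pderiv (R := ℂ) i))^[t] (lin a ^ m) =
      C ((m.descFactorial t : ℂ) * a i ^ t) * lin a ^ (m - t) := by
  induction t with
  | zero => simp
  | succ t ih =>
      rw [Function.iterate_succ_apply', ih, pderiv_C_mul, pderiv_lin_pow, ← mul_assoc,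
        ← map_mul, Nat.sub_sub, Nat.descFactorial_succ]
      congr 1
      push_cast
      ring

lemma foldr_lin_pow {n : ℕ} (α : Fin (n + 1) →₀ ℕ) (a : Fin (n + 1) → ℂ) (m : ℕ)
    (L : List (Fin (n + 1))) :
    L.foldr (fun i h => (⇑(pderiv (R := ℂ) i))^[α i] h) (lin a ^ m) =
      C ((m.descFactorial ((L.map α).sum) : ℂ) * (L.map (fun i => a i ^ α i)).prod) *
        lin a ^ (m - (L.map α).sum) := by
  induction L with
  | nil => simp
  | cons i L ih =>
      rw [List.foldr_cons, ih, ← smul_eq_C_mul]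
      rw [iter_pderiv_smul, smul_eq_C_mul, iter_pderiv_lin_pow]
      rw [← mul_assoc, ← map_mul, List.map_cons, List.map_cons, List.sum_cons, List.prod_cons,
        Nat.sub_sub]
      have hd : m.descFactorial (α i + (L.map α).sum)
          = m.descFactorial ((L.map α).sum) * ((m - (L.map α).sum).descFactorial (α i)) := by
        rw [add_comm]; exact descFactorial_add' m _ _
      congr 1
      · congr 1
        rw [hd]
        push_cast
        ring
      · congr 1
        omega
lemma diffOp_lin_pow {n : ℕ} (α : Fin (n + 1) →₀ ℕ) (a : Fin (n + 1) → ℂ) (m : ℕ) :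
    diffOp α (lin a ^ m) =
      C ((m.descFactorial (∑ i, α i) : ℂ) * ∏ i, a i ^ α i) * lin a ^ (m - ∑ i, α i) := by
  unfold diffOp
  rw [foldr_lin_pow]
  rw [← Fin.sum_univ_def, ← Fin.prod_univ_def]

lemma support_degree {n d : ℕ} {G : MvPolynomial (Fin (n + 1)) ℂ} (hG : G.IsHomogeneous d)
    {α : Fin (n + 1) →₀ ℕ} (hα : α ∈ G.support) : ∑ i, α i = d := by
  have h := hG (MvPolynomial.mem_support_iff.mp hα)
  rw [← h, Finsupp.weight_apply, Finsupp.sum_fintype]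
  · simp
  · intro i; simp

lemma apolar_lin_pow {n d : ℕ} (G : MvPolynomial (Fin (n + 1)) ℂ) (hG : G.IsHomogeneous d)
    (a : Fin (n + 1) → ℂ) :
    apolar G (lin a ^ d) = C ((d.factorial : ℂ) * eval a G) := by
  unfold apolar
  rw [eval_eq', Finset.mul_sum, map_sum]
  apply Finset.sum_congr rfl
  intro α hα
  rw [diffOp_lin_pow, support_degree hG hα, Nat.descFactorial_self, Nat.sub_self, pow_zero,
    mul_one, smul_eq_C_mul, ← map_mul]
  congr 1
  ring

lemma pairP_lin_pow {n d : ℕ} (G : MvPolynomial (Fin (n + 1)) ℂ) (hG : G.IsHomogeneous d)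
    (a : Fin (n + 1) → ℂ) :
    pairP G (lin a ^ d) = (d.factorial : ℂ) * eval a G := by
  unfold pairP
  rw [apolar_lin_pow G hG a, MvPolynomial.coeff_zero_C]

lemma pairP_lin_pow_left {n d : ℕ} (h : MvPolynomial (Fin (n + 1)) ℂ) (hh : h.IsHomogeneous d)
    (a : Fin (n + 1) → ℂ) :
    pairP (lin a ^ d) h = (d.factorial : ℂ) * eval a h := by
  rw [pairP_symm, pairP_lin_pow h hh a]

lemma mem_vanishingIdeal {n : ℕ} {A : Set (Pt n)} {G : MvPolynomial (Fin (n + 1)) ℂ} {k : ℕ}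
    (hk : G.IsHomogeneous k) (hv : ∀ p ∈ A, eval p.rep G = 0) : G ∈ vanishingIdeal A :=
  Ideal.subset_span ⟨⟨k, hk⟩, hv⟩

lemma eval_zero_of_mem_vanishingIdeal {n : ℕ} {A : Set (Pt n)}
    {G : MvPolynomial (Fin (n + 1)) ℂ} (hG : G ∈ vanishingIdeal A) {p : Pt n} (hp : p ∈ A) :
    eval p.rep G = 0 := by
  refine Submodule.span_induction ?_ ?_ ?_ ?_ hG
  · intro x hx; exact hx.2 p hp
  · simp
  · intro x y _ _ hx hy; rw [map_add, hx, hy, add_zero]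
  · intro a x _ hx
    rw [smul_eq_mul, map_mul, hx, mul_zero]

lemma sum_delta_mul {N : ℕ} (m : Fin N) (v : Fin N → ℂ) :
    ∑ i, (if i = m then (1:ℂ) else 0) * v i = v m := by
  simp [ite_mul]

lemma eval_lin_delta {N : ℕ} (m j : Fin N) (e c : ℂ) (v : Fin N → ℂ) :
    ∑ i, (e * ((if i = m then (1:ℂ) else 0) - c * (if i = j then 1 else 0))) * v i
      = e * (v m - c * v j) := by
  have expand : (fun i => (e * ((if i = m then (1:ℂ) else 0) - c * (if i = j then 1 else 0))) * v i)
      = fun i => e * ((if i = m then (1:ℂ) else 0) * v i)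
          - (e * c) * ((if i = j then (1:ℂ) else 0) * v i) := by
    funext i; ring
  rw [Finset.sum_congr rfl (fun i _ => congrFun expand i), Finset.sum_sub_distrib,
    ← Finset.mul_sum, ← Finset.mul_sum, sum_delta_mul, sum_delta_mul]
  ring

lemma exists_sep {n : ℕ} (p q : Pt n) (hpq : p ≠ q) :
    ∃ a : Fin (n + 1) → ℂ, eval p.rep (lin a) = 1 ∧ eval q.rep (lin a) = 0 := by
  obtain ⟨j, hj⟩ : ∃ j, q.rep j ≠ 0 := Function.ne_iff.mp (Projectivization.rep_nonzero q)
  obtain ⟨m, hm⟩ : ∃ m, p.rep m - (p.rep j / q.rep j) * q.rep m ≠ 0 := by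
    by_contra hcon
    push_neg at hcon
    have hrep : p.rep = (p.rep j / q.rep j) • q.rep := by
      funext i
      have := hcon i
      simpa [sub_eq_zero] using this
    apply hpq
    rw [← Projectivization.mk_rep p, ← Projectivization.mk_rep q,
      Projectivization.mk_eq_mk_iff' ℂ _ _ (Projectivization.rep_nonzero p)
      (Projectivization.rep_nonzero q)]
    exact ⟨p.rep j / q.rep j, hrep.symm⟩
  set cc : ℂ := q.rep m / q.rep j with hcc
  set e : ℂ := p.rep m - cc * p.rep j with he
  have he' : e = p.rep m - (p.rep j / q.rep j) * q.rep m := by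
    rw [he, hcc]
    field_simp
  have hene : e ≠ 0 := by rw [he']; exact hm
  refine ⟨fun i => e⁻¹ * ((if i = m then 1 else 0) - cc * (if i = j then 1 else 0)), ?_, ?_⟩
  · rw [eval_lin, eval_lin_delta, ← he, inv_mul_cancel₀ hene]
  · rw [eval_lin, eval_lin_delta, hcc, div_mul_cancel₀ _ hj, sub_self, mul_zero]

open Classical in
lemma interp_set_nonempty {n : ℕ} (A : Set (Pt n)) (hfin : A.Finite) :
    {k | ∃ U : Pt n → MvPolynomial (Fin (n + 1)) ℂ,
      ∀ p ∈ A, (U p).IsHomogeneous k ∧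
        ∀ q ∈ A, eval q.rep (U p) = if q = p then 1 else 0}.Nonempty := by
  classical
  set sep : Pt n → Pt n → (Fin (n + 1) → ℂ) := fun p q =>
    if h : p = q then 0 else Classical.choose (exists_sep p q h) with hsep
  have hsep1 : ∀ p q (h : p ≠ q), eval p.rep (lin (sep p q)) = 1 := by
    intro p q h
    rw [hsep]
    simp only [dif_neg h]
    exact (Classical.choose_spec (exists_sep p q h)).1
  have hsep2 : ∀ p q (h : p ≠ q), eval q.rep (lin (sep p q)) = 0 := by
    intro p q h
    rw [hsep]
    simp only [dif_neg h]
    exact (Classical.choose_spec (exists_sep p q h)).2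
  refine ⟨hfin.toFinset.card - 1,
    fun p => ∏ q ∈ hfin.toFinset.erase p, lin (sep p q), fun p hp => ⟨?_, ?_⟩⟩
  · have hhom := MvPolynomial.IsHomogeneous.prod (hfin.toFinset.erase p)
      (fun q => lin (sep p q)) (fun _ => 1) (fun q _ => lin_isHomogeneous _)
    rwa [Finset.sum_const, smul_eq_mul, mul_one,
      Finset.card_erase_of_mem (hfin.mem_toFinset.mpr hp)] at hhom
  · intro q hq
    by_cases hqp : q = p
    · rw [if_pos hqp, hqp, map_prod]
      exact Finset.prod_eq_one fun x hx =>
        hsep1 p x (fun h => (Finset.mem_erase.mp hx).1 h.symm)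
    · rw [if_neg hqp, map_prod]
      refine Finset.prod_eq_zero (Finset.mem_erase.mpr ⟨hqp, hfin.mem_toFinset.mpr hq⟩) ?_
      exact hsep2 p q (fun h => hqp h.symm)

open Classical in
lemma interp_at {n : ℕ} (A : Set (Pt n)) (hfin : A.Finite) (m : ℕ) (hm : interpReg A ≤ m) :
    ∃ W : Pt n → MvPolynomial (Fin (n + 1)) ℂ,
      ∀ p ∈ A, (W p).IsHomogeneous m ∧
        ∀ q ∈ A, eval q.rep (W p) = if q = p then 1 else 0 := by
  classical
  have hU' : interpReg A ∈ {k | ∃ U : Pt n → MvPolynomial (Fin (n + 1)) ℂ,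
      ∀ p ∈ A, (U p).IsHomogeneous k ∧
        ∀ q ∈ A, eval q.rep (U p) = if q = p then 1 else 0} :=
    Nat.sInf_mem (interp_set_nonempty A hfin)
  obtain ⟨U, hU⟩ := hU'
  set jp : Pt n → Fin (n + 1) := fun p =>
    Classical.choose (Function.ne_iff.mp (Projectivization.rep_nonzero p)) with hjp
  have hjpne : ∀ p : Pt n, p.rep (jp p) ≠ 0 := fun p =>
    Classical.choose_spec (Function.ne_iff.mp (Projectivization.rep_nonzero p))
  refine ⟨fun p => C ((p.rep (jp p))⁻¹ ^ (m - interpReg A)) *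
    (X (jp p) ^ (m - interpReg A) * U p), fun p hp => ⟨?_, ?_⟩⟩
  · have h1 := (isHomogeneous_C (Fin (n + 1)) ((p.rep (jp p))⁻¹ ^ (m - interpReg A)))
    have h2 := (isHomogeneous_X ℂ (jp p)).pow (m - interpReg A)
    have h3 := (hU p hp).1
    have hmul := h1.mul (h2.mul h3)
    rwa [show 0 + (1 * (m - interpReg A) + interpReg A) = m from by omega] at hmul
  · intro q hq
    rw [map_mul, map_mul, eval_C, map_pow, eval_X, (hU p hp).2 q hq]
    by_cases hqp : q = p
    · rw [if_pos hqp, hqp, mul_one, ← mul_pow, inv_mul_cancel₀ (hjpne p), one_pow]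
    · rw [if_neg hqp, mul_zero, mul_zero]
lemma degree_eq_univ_sum {N : ℕ} (α : Fin N →₀ ℕ) : α.degree = ∑ i, α i := by
  rw [Finsupp.degree]
  exact Finset.sum_subset (Finset.subset_univ _)
    (fun i _ h => Finsupp.notMem_support_iff.mp h)

lemma lin_pow_isHomogeneous {n d : ℕ} (a : Fin (n + 1) → ℂ) :
    (lin a ^ d).IsHomogeneous d := by
  simpa using (lin_isHomogeneous a).pow d

lemma smul_isHomogeneous {n d : ℕ} (c : ℂ) {h : MvPolynomial (Fin (n + 1)) ℂ}
    (hh : h.IsHomogeneous d) : (c • h).IsHomogeneous d := by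
  rw [smul_eq_C_mul]
  simpa using (isHomogeneous_C _ c).mul hh

lemma factorial_cast_ne {d : ℕ} : ((d.factorial : ℂ)) ≠ 0 :=
  Nat.cast_ne_zero.mpr (Nat.factorial_ne_zero d)

open Classical in
lemma decomp {n d : ℕ} (f : MvPolynomial (Fin (n + 1)) ℂ) (hf : f.IsHomogeneous d)
    (A : Set (Pt n)) (hfin : A.Finite) (hap : isApolar f A) (V : Pt n → MvPolynomial (Fin (n + 1)) ℂ)
    (hV : ∀ p ∈ A, (V p).IsHomogeneous d ∧
      ∀ q ∈ A, eval q.rep (V p) = if q = p then 1 else 0) :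
    f = ∑ ξ ∈ hfin.toFinset, (pairP (V ξ) f / (d.factorial : ℂ)) • lin ξ.rep ^ d := by
  classical
  set T := hfin.toFinset with hT
  set c : Pt n → ℂ := fun ξ => pairP (V ξ) f / (d.factorial : ℂ) with hc
  set g := f - ∑ ξ ∈ T, c ξ • lin ξ.rep ^ d with hg
  have hmemA : ∀ ξ ∈ T, ξ ∈ A := fun ξ hξ => hfin.mem_toFinset.mp hξ
  have hghom : g.IsHomogeneous d :=
    hf.sub (MvPolynomial.IsHomogeneous.sum _ _ _ fun ξ _ =>
      smul_isHomogeneous _ (lin_pow_isHomogeneous _))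
  have key : ∀ G : MvPolynomial (Fin (n + 1)) ℂ, G.IsHomogeneous d → pairP G g = 0 := by
    intro G hG
    set G' := G - ∑ ξ ∈ T, eval ξ.rep G • V ξ with hG'
    have hG'hom : G'.IsHomogeneous d :=
      hG.sub (MvPolynomial.IsHomogeneous.sum _ _ _ fun ξ hξ =>
        smul_isHomogeneous _ (hV ξ (hmemA ξ hξ)).1)
    have hG'van : ∀ p ∈ A, eval p.rep G' = 0 := by
      intro p hp
      rw [hG', map_sub, map_sum]
      have hterm : ∀ ξ ∈ T, eval p.rep (eval ξ.rep G • V ξ)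
          = if p = ξ then eval ξ.rep G else 0 := by
        intro ξ hξ
        rw [smul_eq_C_mul, map_mul, eval_C, (hV ξ (hmemA ξ hξ)).2 p hp]
        by_cases h : p = ξ <;> simp [h]
      rw [Finset.sum_congr rfl hterm, Finset.sum_ite_eq T p (fun x => eval x.rep G),
        if_pos (hfin.mem_toFinset.mpr hp), sub_self]
    have h1 : pairP G' f = 0 := by
      unfold pairP
      rw [hap G' (mem_vanishingIdeal hG'hom hG'van)]
      simp
    have h2 : ∀ p ∈ T, pairP G' (lin p.rep ^ d) = 0 := fun p hp => by
      rw [pairP_lin_pow G' hG'hom p.rep, hG'van p (hmemA p hp), mul_zero]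
    have h3 : pairP G' g = 0 := by
      rw [hg, pairP_sub_right, h1, pairP_sum_right, Finset.sum_eq_zero, sub_zero]
      intro ξ hξ
      rw [pairP_smul_right, h2 ξ hξ, mul_zero]
    have h4 : ∀ p ∈ T, pairP (V p) g = 0 := by
      intro p hp
      have hterm : ∀ ξ ∈ T, pairP (V p) (c ξ • lin ξ.rep ^ d)
          = if ξ = p then c ξ * (d.factorial : ℂ) else 0 := by
        intro ξ hξ
        rw [pairP_smul_right, pairP_lin_pow (V p) (hV p (hmemA p hp)).1 ξ.rep,
          (hV p (hmemA p hp)).2 ξ (hmemA ξ hξ)]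
        by_cases h : ξ = p <;> simp [h] <;> ring
      rw [hg, pairP_sub_right, pairP_sum_right, Finset.sum_congr rfl hterm,
        Finset.sum_ite_eq' T p (fun ξ => c ξ * (d.factorial : ℂ)), if_pos hp, hc,
        div_mul_cancel₀ _ factorial_cast_ne, sub_self]
    have hsplit : pairP G g = pairP G' g + pairP (∑ ξ ∈ T, eval ξ.rep G • V ξ) g := by
      rw [hG', pairP_sub_left]
      ring
    rw [hsplit, h3, zero_add, pairP_sum_left, Finset.sum_eq_zero]
    intro ξ hξ
    rw [pairP_smul_left, h4 ξ hξ, mul_zero]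
  have hg0 : g = 0 := by
    apply MvPolynomial.ext
    intro α
    rw [MvPolynomial.coeff_zero]
    by_cases hα : ∑ i, α i = d
    · have hmono := key (MvPolynomial.monomial α 1)
        (isHomogeneous_monomial 1 ((degree_eq_univ_sum α).trans hα))
      rw [pairP_monomial_one] at hmono
      have hne : (∏ i, ((α i).factorial : ℂ)) ≠ 0 :=
        Finset.prod_ne_zero_iff.mpr fun i _ => factorial_cast_ne
      exact (mul_eq_zero.mp hmono).resolve_left hne
    · by_contra hcon
      exact hα (support_degree hghom (MvPolynomial.mem_support_iff.mpr hcon))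
  have hfe : f = ∑ ξ ∈ T, c ξ • lin ξ.rep ^ d := by
    rwa [hg, sub_eq_zero] at hg0
  exact hfe

lemma homog0_eq_C {n : ℕ} {h : MvPolynomial (Fin (n + 1)) ℂ} (hh : h.IsHomogeneous 0) :
    h = C (MvPolynomial.coeff 0 h) := by
  apply MvPolynomial.ext
  intro α
  rw [MvPolynomial.coeff_C]
  by_cases hα : α = 0
  · rw [hα, if_pos rfl]
  · rw [if_neg (fun hc => hα hc.symm)]
    by_contra hcon
    apply hα
    have hs := support_degree hh (MvPolynomial.mem_support_iff.mpr hcon)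
    ext i
    have : ∀ j ∈ Finset.univ, α j = 0 := by
      intro j _
      by_contra hj
      have : 0 < ∑ i, α i := Finset.sum_pos' (fun _ _ => Nat.zero_le _)
        ⟨j, Finset.mem_univ j, Nat.pos_of_ne_zero hj⟩
      omega
    exact this i (Finset.mem_univ i)

end AuxProof

theorem stmt2 {n d : ℕ} (f : MvPolynomial (Fin (n + 1)) ℂ) (hf : f.IsHomogeneous d)
    (A : Set (Pt n)) (hmin : isMinApolar d f A) (hreg : interpReg A ≤ d) :
    ∀ k ≤ d - interpReg A, idealPiece (vanishingIdeal A) k = perpPiece f k := by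
  classical
  obtain ⟨hfin, hap, hcard⟩ := hmin
  intro k hk
  ext G
  constructor
  · rintro ⟨hhom, hGmem⟩
    exact ⟨hhom, hap G hGmem⟩
  · rintro ⟨hhom, hGperp⟩
    refine ⟨hhom, mem_vanishingIdeal hhom ?_⟩
    intro ξ₀ hξ₀
    set T := hfin.toFinset with hT
    have hξ₀T : ξ₀ ∈ T := hfin.mem_toFinset.mpr hξ₀
    have hcardT : A.ncard = T.card := Set.ncard_eq_toFinset_card A hfin
    by_cases hd : d = 0
    · -- degree-zero case
      subst hd
      have hk0 : k = 0 := by omega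
      subst hk0
      have hfne : f ≠ 0 := by
        intro h0
        have h0mem : (0 : ℕ) ∈ {r | ∃ a : Fin r → (Fin (n + 1) → ℂ),
            f = ∑ i, lin (a i) ^ 0} := ⟨fun i => 0, by simp [h0]⟩
        have hle : wrank 0 f ≤ 0 := Nat.sInf_le h0mem
        have : A.ncard = 0 := by omega
        rw [Set.ncard_eq_zero hfin] at this
        rw [this] at hξ₀
        exact hξ₀
      have hG0 : G = C (MvPolynomial.coeff 0 G) := homog0_eq_C hhom
      have hfC : f = C (MvPolynomial.coeff 0 f) := homog0_eq_C hf
      have : apolar G f = MvPolynomial.coeff 0 G • f := by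
        conv_lhs => rw [hG0, MvPolynomial.C_apply]
        rw [apolar_monomial, diffOp_zero_left]
      rw [this] at hGperp
      have hc0 : MvPolynomial.coeff 0 G = 0 := by
        rcases smul_eq_zero.mp hGperp with h | h
        · exact h
        · exact absurd h hfne
      rw [hG0, hc0, map_zero, map_zero]
    · -- main case, d ≥ 1
      have hdk : interpReg A ≤ d - k := by omega
      obtain ⟨W, hW⟩ := interp_at A hfin (d - k) hdk
      obtain ⟨V, hV⟩ := interp_at A hfin d hreg
      have hdecomp0 := decomp f hf A hfin hap V hV
      rw [← hT] at hdecomp0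
      set c : Pt n → ℂ := fun ξ => pairP (V ξ) f / (d.factorial : ℂ) with hc
      have hdecomp : f = ∑ ξ ∈ T, c ξ • lin ξ.rep ^ d := hdecomp0
      have hWG : (W ξ₀ * G).IsHomogeneous d := by
        have := ((hW ξ₀ hξ₀).1).mul hhom
        rwa [show d - k + k = d from by omega] at this
      have hzero : pairP (W ξ₀ * G) f = 0 := by
        unfold pairP
        rw [apolar_mul, hGperp, apolar_zero_right, MvPolynomial.coeff_zero]
      have hval : pairP (W ξ₀ * G) f = c ξ₀ * ((d.factorial : ℂ) * eval ξ₀.rep G) := by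
        conv_lhs => rw [hdecomp]
        rw [pairP_sum_right]
        have hterm : ∀ ξ ∈ T, pairP (W ξ₀ * G) (c ξ • lin ξ.rep ^ d)
            = if ξ = ξ₀ then c ξ * ((d.factorial : ℂ) * eval ξ.rep G) else 0 := by
          intro ξ hξ
          rw [pairP_smul_right, pairP_lin_pow _ hWG ξ.rep, map_mul,
            (hW ξ₀ hξ₀).2 ξ (hfin.mem_toFinset.mp hξ)]
          by_cases h : ξ = ξ₀
          · simp only [if_pos h]
            ring
          · simp only [if_neg h]
            ring
        rw [Finset.sum_congr rfl hterm,
          Finset.sum_ite_eq' T ξ₀ (fun ξ => c ξ * ((d.factorial : ℂ) * eval ξ.rep G)),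
          if_pos hξ₀T]
      have hprod : c ξ₀ * ((d.factorial : ℂ) * eval ξ₀.rep G) = 0 := by
        rw [← hval, hzero]
      have hcne : c ξ₀ ≠ 0 := by
        intro h0
        have hf' : f = ∑ ξ ∈ T.erase ξ₀, c ξ • lin ξ.rep ^ d := by
          rw [hdecomp]
          exact (Finset.sum_erase T
            (show c ξ₀ • lin ξ₀.rep ^ d = 0 by rw [h0, zero_smul])).symm
        set t : Pt n → ℂ := fun ξ =>
          Classical.choose (IsAlgClosed.exists_pow_nat_eq (k := ℂ) (c ξ)
            (Nat.pos_of_ne_zero hd)) with ht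
        have htspec : ∀ ξ, t ξ ^ d = c ξ := fun ξ =>
          Classical.choose_spec (IsAlgClosed.exists_pow_nat_eq (k := ℂ) (c ξ)
            (Nat.pos_of_ne_zero hd))
        set S := T.erase ξ₀ with hS
        set e := S.equivFin with he
        have hmem : S.card ∈ {r | ∃ a : Fin r → (Fin (n + 1) → ℂ),
            f = ∑ i, lin (a i) ^ d} := by
          refine ⟨fun i => t ((e.symm i) : Pt n) • ((e.symm i) : Pt n).rep, ?_⟩
          rw [hf']
          have step1 : ∀ i : Fin S.card,
              lin (t ((e.symm i) : Pt n) • ((e.symm i) : Pt n).rep) ^ d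
                = c ((e.symm i) : Pt n) • lin ((e.symm i) : Pt n).rep ^ d := by
            intro i
            rw [lin_smul, mul_pow, ← map_pow, htspec, smul_eq_C_mul]
          rw [Finset.sum_congr rfl (fun i _ => step1 i)]
          rw [← Finset.sum_coe_sort S (fun ξ => c ξ • lin (ξ : Pt n).rep ^ d)]
          exact (Fintype.sum_equiv e.symm _ _ (fun i => rfl)).symm
        have hle : wrank d f ≤ S.card := Nat.sInf_le hmem
        have hScard : S.card = T.card - 1 := Finset.card_erase_of_mem hξ₀T
        have hTpos : 0 < T.card := Finset.card_pos.mpr ⟨ξ₀, hξ₀T⟩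
        omega
      have := mul_eq_zero.mp ((mul_eq_zero.mp hprod).resolve_left hcne)
      rcases this with h | h
      · exact absurd h factorial_cast_ne
      · exact h


end
end

section
/- Let f ∈ ℂ[x_0,x_1,x_2]_d be concise with d ≥ 5 and rk(f) = 5, and suppose f admits a minimal apolar set of five points in ℙ^2 no four of which are collinear. Then f has a unique minimal apolar set of points. -/
noncomputable section

open MvPolynomial

namespace Stmt18Aux

open Finsupp

variable {n : ℕ}

lemma iter_pderiv_add (i : Fin n) (k : ℕ) (f g : MvPolynomial (Fin n) ℂ) :
    (⇑(pderiv (R := ℂ) i))^[k] (f + g) =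
      (⇑(pderiv (R := ℂ) i))^[k] f + (⇑(pderiv (R := ℂ) i))^[k] g := by
  induction k generalizing f g with
  | zero => rfl
  | succ k ih => rw [Function.iterate_succ_apply', Function.iterate_succ_apply',
      Function.iterate_succ_apply', ih, map_add]

lemma iter_pderiv_smul (i : Fin n) (k : ℕ) (c : ℂ) (f : MvPolynomial (Fin n) ℂ) :
    (⇑(pderiv (R := ℂ) i))^[k] (c • f) = c • (⇑(pderiv (R := ℂ) i))^[k] f := by
  induction k generalizing f with
  | zero => rfl
  | succ k ih => rw [Function.iterate_succ_apply', Function.iterate_succ_apply', ih,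
      Derivation.map_smul]

lemma iter_pderiv_zero (i : Fin n) (k : ℕ) :
    (⇑(pderiv (R := ℂ) i))^[k] (0 : MvPolynomial (Fin n) ℂ) = 0 := by
  induction k with
  | zero => rfl
  | succ k ih => rw [Function.iterate_succ_apply', ih, map_zero]

lemma diffOp_add (α : Fin n →₀ ℕ) (f g : MvPolynomial (Fin n) ℂ) :
    diffOp α (f + g) = diffOp α f + diffOp α g := by
  unfold diffOp
  induction List.finRange n with
  | nil => rfl
  | cons i l ih => simp only [List.foldr_cons, ih, iter_pderiv_add]

lemma diffOp_smul (α : Fin n →₀ ℕ) (c : ℂ) (f : MvPolynomial (Fin n) ℂ) :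
    diffOp α (c • f) = c • diffOp α f := by
  unfold diffOp
  induction List.finRange n with
  | nil => rfl
  | cons i l ih => simp only [List.foldr_cons, ih, iter_pderiv_smul]

lemma diffOp_zero (α : Fin n →₀ ℕ) : diffOp α (0 : MvPolynomial (Fin n) ℂ) = 0 := by
  unfold diffOp
  induction List.finRange n with
  | nil => rfl
  | cons i l ih => simp only [List.foldr_cons, ih, iter_pderiv_zero]

lemma diffOp_sum {ι : Type*} (α : Fin n →₀ ℕ) (s : Finset ι)
    (h : ι → MvPolynomial (Fin n) ℂ) :
    diffOp α (∑ j ∈ s, h j) = ∑ j ∈ s, diffOp α (h j) := by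
  classical
  induction s using Finset.induction with
  | empty => simpa using diffOp_zero α
  | @insert j s hj ih => rw [Finset.sum_insert hj, Finset.sum_insert hj, diffOp_add, ih]

lemma apolar_f_add (G f g : MvPolynomial (Fin n) ℂ) :
    apolar G (f + g) = apolar G f + apolar G g := by
  unfold apolar
  rw [← Finset.sum_add_distrib]
  exact Finset.sum_congr rfl fun α _ => by rw [diffOp_add, smul_add]

lemma apolar_f_smul (G : MvPolynomial (Fin n) ℂ) (c : ℂ) (f : MvPolynomial (Fin n) ℂ) :
    apolar G (c • f) = c • apolar G f := by
  unfold apolar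
  rw [Finset.smul_sum]
  exact Finset.sum_congr rfl fun α _ => by
    rw [diffOp_smul, smul_comm]

lemma apolar_f_zero (G : MvPolynomial (Fin n) ℂ) : apolar G (0 : MvPolynomial (Fin n) ℂ) = 0 := by
  unfold apolar
  exact Finset.sum_eq_zero fun α _ => by rw [diffOp_zero, smul_zero]

lemma apolar_f_sum {ι : Type*} (G : MvPolynomial (Fin n) ℂ) (s : Finset ι)
    (h : ι → MvPolynomial (Fin n) ℂ) :
    apolar G (∑ j ∈ s, h j) = ∑ j ∈ s, apolar G (h j) := by
  classical
  induction s using Finset.induction with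
  | empty => simpa using apolar_f_zero G
  | @insert j s hj ih => rw [Finset.sum_insert hj, Finset.sum_insert hj, apolar_f_add, ih]

lemma apolar_f_sub (G f g : MvPolynomial (Fin n) ℂ) :
    apolar G (f - g) = apolar G f - apolar G g := by
  have h := apolar_f_add G (f - g) g
  rw [sub_add_cancel] at h
  exact eq_sub_of_add_eq h.symm

end Stmt18Aux
namespace Stmt18Aux

lemma descFactorial_add' (m s t : ℕ) :
    m.descFactorial (s + t) = m.descFactorial s * (m - s).descFactorial t := by
  induction t with
  | zero => simp
  | succ t ih =>
    rw [← Nat.add_assoc, Nat.descFactorial_succ, Nat.descFactorial_succ, ih, Nat.sub_sub]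
    ring_nf

lemma iter_pderiv_monomial {n : ℕ} (i : Fin n) (t : ℕ) (β : Fin n →₀ ℕ) (c : ℂ) :
    (⇑(pderiv (R := ℂ) i))^[t] (monomial β c) =
      monomial (β - Finsupp.single i t) (((β i).descFactorial t : ℕ) * c) := by
  induction t with
  | zero => simp
  | succ t ih =>
    rw [Function.iterate_succ_apply', ih, pderiv_monomial]
    have hidx : β - Finsupp.single i t - Finsupp.single i 1 = β - Finsupp.single i (t + 1) := by
      rw [tsub_tsub, ← Finsupp.single_add]
    rw [hidx]
    congr 1
    have happ : (β - Finsupp.single i t) i = β i - t := by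
      rw [Finsupp.tsub_apply, Finsupp.single_eq_same]
    rw [happ, Nat.descFactorial_succ]
    push_cast
    ring_nf

lemma listsum_single_apply {n : ℕ} (α : Fin n →₀ ℕ) (i : Fin n) :
    ∀ (l : List (Fin n)), i ∉ l →
      ((l.map (fun j => Finsupp.single j (α j))).sum) i = 0 := by
  intro l
  induction l with
  | nil => intro _; rfl
  | cons j l ih =>
    intro hi
    rw [List.map_cons, List.sum_cons, Finsupp.add_apply,
      Finsupp.single_eq_of_ne (fun h => hi (by rw [← h]; exact List.mem_cons_self)),
      ih (fun h => hi (List.mem_cons_of_mem j h)), Nat.add_zero]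

lemma foldr_monomial {n : ℕ} (α : Fin n →₀ ℕ) (β : Fin n →₀ ℕ) (c : ℂ) :
    ∀ (l : List (Fin n)), l.Nodup →
      l.foldr (fun i h => (⇑(pderiv (R := ℂ) i))^[α i] h) (monomial β c) =
        monomial (β - (l.map (fun j => Finsupp.single j (α j))).sum)
          (((l.map (fun i => (β i).descFactorial (α i))).prod : ℕ) * c) := by
  intro l
  induction l with
  | nil => intro _; simp
  | cons i l ih =>
    intro hnd
    have hi : i ∉ l := (List.nodup_cons.mp hnd).1
    rw [List.foldr_cons, ih (List.nodup_cons.mp hnd).2, iter_pderiv_monomial]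
    have happ : (β - (l.map (fun j => Finsupp.single j (α j))).sum) i = β i := by
      rw [Finsupp.tsub_apply, listsum_single_apply α i l hi, Nat.sub_zero]
    rw [happ]
    congr 1
    · rw [List.map_cons, List.sum_cons, tsub_tsub, add_comm]
    · rw [List.map_cons, List.prod_cons]
      push_cast
      ring_nf

lemma diffOp_monomial {n : ℕ} (α β : Fin n →₀ ℕ) (c : ℂ) :
    diffOp α (monomial β c) =
      monomial (β - α) ((∏ i, (β i).descFactorial (α i) : ℕ) * c) := by
  rw [diffOp, foldr_monomial α β c _ (List.nodup_finRange n)]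
  have h1 : ((List.finRange n).map (fun j => Finsupp.single j (α j))).sum = α := by
    rw [← Fin.sum_univ_def]
    ext j
    rw [Finset.sum_apply']
    simp [Finsupp.single_apply]
  have h2 : ((List.finRange n).map (fun i => (β i).descFactorial (α i))).prod
      = ∏ i, (β i).descFactorial (α i) := by
    rw [Fin.prod_univ_def]
  rw [h1, h2]

end Stmt18Aux
namespace Stmt18Aux

lemma eval_lin {n : ℕ} (u a : Fin (n + 1) → ℂ) :
    eval u (lin a) = ∑ i, a i * u i := by
  simp [lin]

lemma lin_isHomog {n : ℕ} (a : Fin (n + 1) → ℂ) : (lin a).IsHomogeneous 1 := by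
  apply IsHomogeneous.sum
  intro i _
  simpa using (isHomogeneous_C _ (a i)).mul (isHomogeneous_X ℂ i)

lemma pderiv_lin {n : ℕ} (i : Fin (n + 1)) (a : Fin (n + 1) → ℂ) :
    pderiv (R := ℂ) i (lin a) = C (a i) := by
  rw [lin, map_sum]
  rw [Finset.sum_eq_single i]
  · rw [pderiv_C_mul, pderiv_X, Pi.single_eq_same]
    simp
  · intro j _ hj
    rw [pderiv_C_mul, pderiv_X, Pi.single_eq_of_ne hj]
    simp
  · simp

lemma pderiv_C_mul_linpow {n : ℕ} (i : Fin (n + 1)) (a : Fin (n + 1) → ℂ) (c : ℂ) (m : ℕ) :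
    pderiv (R := ℂ) i (C c * lin a ^ m) = C (c * m * a i) * lin a ^ (m - 1) := by
  rw [pderiv_C_mul, pderiv_pow, pderiv_lin, map_mul, map_mul, map_natCast]
  ring_nf

lemma iter_pderiv_C_mul_linpow {n : ℕ} (i : Fin (n + 1)) (a : Fin (n + 1) → ℂ)
    (t : ℕ) (c : ℂ) (m : ℕ) :
    (⇑(pderiv (R := ℂ) i))^[t] (C c * lin a ^ m) =
      C (c * (m.descFactorial t : ℕ) * a i ^ t) * lin a ^ (m - t) := by
  induction t with
  | zero => simp
  | succ t ih =>
    rw [Function.iterate_succ_apply', ih, pderiv_C_mul_linpow, Nat.sub_sub,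
      Nat.descFactorial_succ]
    congr 1
    push_cast
    ring_nf

lemma foldr_linpow {n : ℕ} (α : Fin (n + 1) →₀ ℕ) (a : Fin (n + 1) → ℂ) (m : ℕ) :
    ∀ (l : List (Fin (n + 1))) (c : ℂ),
      l.foldr (fun i h => (⇑(pderiv (R := ℂ) i))^[α i] h) (C c * lin a ^ m) =
        C (c * (m.descFactorial (l.map α).sum : ℕ) * (l.map (fun i => a i ^ α i)).prod)
          * lin a ^ (m - (l.map α).sum) := by
  intro l
  induction l with
  | nil => intro c; simp
  | cons i l ih =>
    intro c
    rw [List.foldr_cons, ih, iter_pderiv_C_mul_linpow, List.map_cons, List.sum_cons,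
      List.map_cons, List.prod_cons, Nat.sub_sub, add_comm (α i) ((l.map α).sum),
      descFactorial_add']
    congr 1
    apply congrArg
    push_cast
    ring

lemma diffOp_linpow {n : ℕ} (α : Fin (n + 1) →₀ ℕ) (a : Fin (n + 1) → ℂ) (m : ℕ) :
    diffOp α (lin a ^ m) =
      C ((m.descFactorial (∑ i, α i) : ℕ) * ∏ i, a i ^ α i) * lin a ^ (m - ∑ i, α i) := by
  have h0 : lin a ^ m = C (1 : ℂ) * lin a ^ m := by rw [map_one, one_mul]
  rw [diffOp, h0, foldr_linpow, ← Fin.sum_univ_def, ← Fin.prod_univ_def, one_mul]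

lemma apolar_homog_linpow {n : ℕ} {G : MvPolynomial (Fin (n + 1)) ℂ} {k : ℕ}
    (hG : G.IsHomogeneous k) (a : Fin (n + 1) → ℂ) (d : ℕ) :
    apolar G (lin a ^ d) =
      C ((d.descFactorial k : ℕ) * eval a G) * lin a ^ (d - k) := by
  rw [apolar]
  have step : ∀ α ∈ G.support, coeff α G • diffOp α (lin a ^ d)
      = C ((d.descFactorial k : ℕ) * coeff α G * ∏ i, a i ^ α i) * lin a ^ (d - k) := by
    intro α hα
    have hdeg : ∑ i, α i = k := by
      have h1 := hG (MvPolynomial.mem_support_iff.mp hα)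
      rw [Pi.one_def, ← Finsupp.degree_eq_weight_one] at h1
      rw [← h1, Finsupp.degree]
      exact (Finset.sum_subset (Finset.subset_univ _) (by simp)).symm
    rw [diffOp_linpow, hdeg, smul_eq_C_mul, ← mul_assoc, ← map_mul]
    congr 2
    ring_nf
  rw [Finset.sum_congr rfl step, ← Finset.sum_mul, ← map_sum]
  congr 1
  apply congrArg
  rw [eval_eq', Finset.mul_sum]
  apply Finset.sum_congr rfl
  intro α hα
  ring_nf
lemma degree_univ {n : ℕ} (α : Fin n →₀ ℕ) : α.degree = ∑ i, α i := by
  rw [Finsupp.degree]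
  exact Finset.sum_subset (Finset.subset_univ _) (by simp)

lemma eq_of_le_of_degree_eq {n : ℕ} {β α : Fin n →₀ ℕ} (hle : β ≤ α)
    (hdeg : β.degree = α.degree) : β = α := by
  rw [degree_univ, degree_univ] at hdeg
  ext i
  exact (Finset.sum_eq_sum_iff_of_le (fun i _ => Finsupp.le_def.mp hle i)).mp hdeg i
    (Finset.mem_univ i)

lemma coeff0_diffOp {n d : ℕ} (α : Fin n →₀ ℕ) (hα : α.degree = d)
    {g : MvPolynomial (Fin n) ℂ} (hg : g.IsHomogeneous d) :
    coeff 0 (diffOp α g) = ((∏ i, (α i).factorial : ℕ) : ℂ) * coeff α g := by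
  conv_lhs => rw [as_sum g]
  rw [diffOp_sum, coeff_sum]
  have step : ∀ β ∈ g.support,
      coeff 0 (diffOp α (monomial β (coeff β g)))
        = if β = α then ((∏ i, (α i).factorial : ℕ) : ℂ) * coeff α g else 0 := by
    intro β hβ
    have hβd : β.degree = d := by
      have h1 := hg (MvPolynomial.mem_support_iff.mp hβ)
      rw [Pi.one_def, ← Finsupp.degree_eq_weight_one] at h1
      exact h1
    rw [diffOp_monomial, coeff_monomial]
    by_cases hba : β = α
    · subst hba
      simp [Nat.descFactorial_self]
    · have : ¬ (β - α = 0) := by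
        intro h0
        exact hba (eq_of_le_of_degree_eq (tsub_eq_zero_iff_le.mp h0) (hβd.trans hα.symm))
      rw [if_neg this, if_neg hba]
  rw [Finset.sum_congr rfl step, Finset.sum_ite_eq' g.support α]
  by_cases hmem : α ∈ g.support
  · rw [if_pos hmem]
  · rw [if_neg hmem, MvPolynomial.notMem_support_iff.mp hmem, mul_zero]

lemma coeff0_apolar_monomial {n d : ℕ} (α : Fin n →₀ ℕ) (hα : α.degree = d)
    {g : MvPolynomial (Fin n) ℂ} (hg : g.IsHomogeneous d) :
    coeff 0 (apolar (monomial α 1) g)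
      = ((∏ i, (α i).factorial : ℕ) : ℂ) * coeff α g := by
  rw [apolar, support_monomial, if_neg (one_ne_zero (α := ℂ)), Finset.sum_singleton,
    coeff_monomial, if_pos rfl, one_smul]
  exact coeff0_diffOp α hα hg

lemma eq_zero_of_pairing_zero {n d : ℕ} {g : MvPolynomial (Fin n) ℂ}
    (hg : g.IsHomogeneous d)
    (h : ∀ G : MvPolynomial (Fin n) ℂ, G.IsHomogeneous d → coeff 0 (apolar G g) = 0) :
    g = 0 := by
  apply MvPolynomial.ext
  intro α
  rw [coeff_zero]
  by_cases hdeg : α.degree = d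
  · have h1 := h (monomial α 1) (isHomogeneous_monomial 1 hdeg)
    rw [coeff0_apolar_monomial α hdeg hg] at h1
    have hne : ((∏ i, (α i).factorial : ℕ) : ℂ) ≠ 0 := by
      simp [Finset.prod_eq_zero_iff, Nat.factorial_ne_zero]
    exact (mul_eq_zero.mp h1).resolve_left hne
  · exact hg.coeff_eq_zero hdeg

lemma coeff0_apolar_linpow {n d : ℕ} {G : MvPolynomial (Fin (n + 1)) ℂ}
    (hG : G.IsHomogeneous d) (a : Fin (n + 1) → ℂ) :
    coeff 0 (apolar G (lin a ^ d)) = (d.factorial : ℂ) * eval a G := by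
  rw [apolar_homog_linpow hG a d, Nat.sub_self, pow_zero, mul_one, coeff_C,
    if_pos rfl, Nat.descFactorial_self]
lemma eval_lin_fun {φ : (Fin 3 → ℂ) →ₗ[ℂ] ℂ} (u : Fin 3 → ℂ) :
    eval u (lin (fun i => φ (Pi.single i 1))) = φ u := by
  rw [eval_lin]
  have hu : u = ∑ i, u i • (Pi.single i (1 : ℂ) : Fin 3 → ℂ) := by
    have h1 : ∀ i, u i • (Pi.single i (1 : ℂ) : Fin 3 → ℂ) = Pi.single i (u i) := by
      intro i; rw [← Pi.single_smul, smul_eq_mul, mul_one]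
    rw [Finset.sum_congr rfl (fun i _ => h1 i), Finset.univ_sum_single]
  conv_rhs => rw [hu]
  rw [map_sum]
  exact Finset.sum_congr rfl fun i _ => by rw [map_smul, smul_eq_mul, mul_comm]

lemma exists_functional {U : Submodule ℂ (Fin 3 → ℂ)} {v : Fin 3 → ℂ} (hv : v ∉ U) :
    ∃ a : Fin 3 → ℂ, eval v (lin a) = 1 ∧ ∀ u ∈ U, eval u (lin a) = 0 := by
  have hπv : U.mkQ v ≠ 0 := by
    simpa [Submodule.mkQ_apply, Submodule.Quotient.mk_eq_zero] using hv
  obtain ⟨ψ, hψ⟩ : ∃ ψ : Module.Dual ℂ ((Fin 3 → ℂ) ⧸ U), ψ (U.mkQ v) ≠ 0 := by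
    by_contra h
    push_neg at h
    exact hπv ((Module.forall_dual_apply_eq_zero_iff ℂ _).mp h)
  set φ : (Fin 3 → ℂ) →ₗ[ℂ] ℂ := (ψ (U.mkQ v))⁻¹ • (ψ.comp U.mkQ) with hφ
  refine ⟨fun i => φ (Pi.single i 1), ?_, ?_⟩
  · rw [eval_lin_fun]
    simp only [hφ, LinearMap.smul_apply, LinearMap.comp_apply, smul_eq_mul]
    exact inv_mul_cancel₀ hψ
  · intro u hu
    rw [eval_lin_fun]
    simp [hφ, Submodule.mkQ_apply, (Submodule.Quotient.mk_eq_zero U).mpr hu]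

lemma pt_eq_of_rep_smul {p q : Pt 2} {c : ℂ} (h : p.rep = c • q.rep) : p = q := by
  have hc : c ≠ 0 := by
    rintro rfl
    rw [zero_smul] at h
    exact Projectivization.rep_nonzero p h
  rw [← Projectivization.mk_rep p, ← Projectivization.mk_rep q]
  exact (Projectivization.mk_eq_mk_iff ℂ _ _ _ _).mpr ⟨Units.mk0 c hc, h.symm⟩

lemma not_mem_span_rep {p q : Pt 2} (h : p ≠ q) :
    p.rep ∉ Submodule.span ℂ {q.rep} := by
  intro hm
  obtain ⟨c, hc⟩ := Submodule.mem_span_singleton.mp hm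
  exact h (pt_eq_of_rep_smul hc.symm)

/-- separating line: vanishes at `q`, equals 1 at `p`. -/
lemma sep_line {p q : Pt 2} (h : p ≠ q) :
    ∃ a : Fin 3 → ℂ, eval p.rep (lin a) = 1 ∧ eval q.rep (lin a) = 0 := by
  obtain ⟨a, h1, h0⟩ := exists_functional (not_mem_span_rep h)
  exact ⟨a, h1, h0 _ (Submodule.mem_span_singleton_self _)⟩

lemma unit_line (p : Pt 2) : ∃ a : Fin 3 → ℂ, eval p.rep (lin a) = 1 := by
  have : p.rep ∉ (⊥ : Submodule ℂ (Fin 3 → ℂ)) := by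
    simp [Projectivization.rep_nonzero p]
  obtain ⟨a, h1, _⟩ := exists_functional this
  exact ⟨a, h1⟩

/-- the collinearity relation through a fixed point `z`. -/
def rel (z y y' : Pt 2) : Prop := y'.rep ∈ Submodule.span ℂ {z.rep, y.rep}

lemma rel_refl (z y : Pt 2) : rel z y y :=
  Submodule.subset_span (by simp)

lemma rel_symm {z y y' : Pt 2} (hy' : y' ≠ z) (h : rel z y y') : rel z y' y := by
  obtain ⟨s, t, hst⟩ := Submodule.mem_span_pair.mp h
  have ht : t ≠ 0 := by
    rintro rfl
    rw [zero_smul, add_zero] at hst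
    exact hy' (pt_eq_of_rep_smul hst.symm)
  refine Submodule.mem_span_pair.mpr ⟨-(t⁻¹ * s), t⁻¹, ?_⟩
  rw [← hst]
  rw [smul_add, smul_smul, smul_smul, inv_mul_cancel₀ ht]
  module

lemma rel_trans {z y y' y'' : Pt 2} (h1 : rel z y y') (h2 : rel z y' y'') : rel z y y'' := by
  have hle : Submodule.span ℂ {z.rep, y'.rep} ≤ Submodule.span ℂ {z.rep, y.rep} := by
    apply Submodule.span_le.mpr
    rintro x (rfl | rfl)
    · exact Submodule.subset_span (by simp)
    · exact h1
  exact hle h2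

/-- A cross-pair line: if `y'` is not on the line through `z` and `y`, then there is a
linear form vanishing at `y, y'` and equal to 1 at `z`. -/
lemma cross_line {z y y' : Pt 2} (hyz : y ≠ z) (hrel : ¬ rel z y y') :
    ∃ a : Fin 3 → ℂ, eval z.rep (lin a) = 1 ∧ eval y.rep (lin a) = 0 ∧
      eval y'.rep (lin a) = 0 := by
  have hz : z.rep ∉ Submodule.span ℂ {y.rep, y'.rep} := by
    intro hm
    obtain ⟨s, t, hst⟩ := Submodule.mem_span_pair.mp hm
    by_cases ht : t = 0
    · subst ht
      rw [zero_smul, add_zero] at hst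
      exact (not_mem_span_rep (fun h => hyz h.symm))
        (hst ▸ Submodule.smul_mem _ s (Submodule.mem_span_singleton_self _))
    · apply hrel
      refine Submodule.mem_span_pair.mpr ⟨t⁻¹, -(t⁻¹ * s), ?_⟩
      rw [← hst]
      rw [smul_add, smul_smul, smul_smul, inv_mul_cancel₀ ht]
      module
  obtain ⟨a, h1, h0⟩ := exists_functional hz
  exact ⟨a, h1, h0 _ (Submodule.subset_span (by simp)),
    h0 _ (Submodule.subset_span (by simp))⟩

/-- From four points on a common line through `z`, produce a nonzero linear form
vanishing on all of them. -/
lemma line_through_four {z y1 y2 y3 y4 : Pt 2} (h2 : rel z y1 y2) (h3 : rel z y1 y3)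
    (h4 : rel z y1 y4) :
    ∃ L : MvPolynomial (Fin 3) ℂ, L.IsHomogeneous 1 ∧ L ≠ 0 ∧
      eval y1.rep L = 0 ∧ eval y2.rep L = 0 ∧ eval y3.rep L = 0 ∧ eval y4.rep L = 0 ∧
      eval z.rep L = 0 := by
  set U := Submodule.span ℂ {z.rep, y1.rep} with hU
  have hne : U ≠ ⊤ := by
    intro htop
    have hcard : ({z.rep, y1.rep} : Set (Fin 3 → ℂ)).toFinset.card ≤ 2 := by
      rw [Set.toFinset_insert, Set.toFinset_singleton]
      exact Finset.card_insert_le _ _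
    have hrank := (finrank_span_le_card (R := ℂ)
      ({z.rep, y1.rep} : Set (Fin 3 → ℂ))).trans hcard
    rw [← hU, htop, finrank_top] at hrank
    rw [Module.finrank_fin_fun] at hrank
    omega
  obtain ⟨v, hv⟩ : ∃ v, v ∉ U := by
    by_contra h
    push_neg at h
    exact hne (Submodule.eq_top_iff'.mpr h)
  obtain ⟨a, h1, h0⟩ := exists_functional hv
  refine ⟨lin a, lin_isHomog a, ?_, ?_, ?_, ?_, ?_, ?_⟩
  · intro hla
    rw [hla] at h1
    simp at h1
  · exact h0 _ (Submodule.subset_span (by simp))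
  · exact h0 _ h2
  · exact h0 _ h3
  · exact h0 _ h4
  · exact h0 _ (Submodule.subset_span (by simp))
lemma apolar_G_sum {n : ℕ} {ι : Type*} (s : Finset ι) (h : ι → MvPolynomial (Fin n) ℂ)
    (f : MvPolynomial (Fin n) ℂ) :
    apolar (∑ j ∈ s, h j) f = ∑ j ∈ s, apolar (h j) f := by
  classical
  induction s using Finset.induction with
  | empty => simpa using apolar_zero f
  | @insert j s hj ih => rw [Finset.sum_insert hj, Finset.sum_insert hj, apolar_add, ih]

/-- Interpolation forms of degree `d ≥ 4` for five distinct points. -/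
lemma interp {d : ℕ} (hd : 4 ≤ d) (w : Fin 5 → Pt 2) (hw : Function.Injective w) :
    ∃ U : Fin 5 → MvPolynomial (Fin 3) ℂ, ∀ i, (U i).IsHomogeneous d ∧
      ∀ j, eval (w j).rep (U i) = if j = i then 1 else 0 := by
  classical
  have hsep : ∀ i j : Fin 5, ∃ a : Fin 3 → ℂ,
      j ≠ i → eval (w i).rep (lin a) = 1 ∧ eval (w j).rep (lin a) = 0 := by
    intro i j
    by_cases h : j = i
    · exact ⟨0, fun h' => absurd h h'⟩
    · exact (sep_line (fun he : w i = w j => h (hw he.symm))).imp fun a ha => fun _ => ha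
  choose A hA using hsep
  choose m hm using fun i : Fin 5 => unit_line (w i)
  refine ⟨fun i => (∏ j ∈ Finset.univ.erase i, lin (A i j)) * lin (m i) ^ (d - 4),
    fun i => ⟨?_, ?_⟩⟩
  · have h1 : (∏ j ∈ Finset.univ.erase i, lin (A i j)).IsHomogeneous
        (∑ _j ∈ Finset.univ.erase i, 1) :=
      IsHomogeneous.prod _ _ _ (fun j _ => lin_isHomog _)
    have hcard : (∑ _j ∈ Finset.univ.erase i, 1) = 4 := by
      rw [Finset.sum_const, smul_eq_mul, mul_one, Finset.card_erase_of_mem (Finset.mem_univ i),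
        Finset.card_univ, Fintype.card_fin]
    rw [hcard] at h1
    have h2 : (lin (m i) ^ (d - 4)).IsHomogeneous (d - 4) := by
      have := (lin_isHomog (m i)).pow (d - 4)
      rwa [one_mul] at this
    have h3 := h1.mul h2
    rwa [Nat.add_sub_cancel' hd] at h3
  · intro j
    by_cases hji : j = i
    · subst hji
      rw [if_pos rfl, map_mul, map_pow, map_prod, hm j, one_pow, mul_one]
      rw [Finset.prod_eq_one]
      intro k hk
      exact (hA j k (Finset.mem_erase.mp hk).1).1
    · rw [if_neg hji, map_mul, map_prod]
      rw [Finset.prod_eq_zero (Finset.mem_erase.mpr ⟨hji, Finset.mem_univ j⟩)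
        (hA i j hji).2, zero_mul]

lemma decomp {d : ℕ} (hd : 4 ≤ d) {f : MvPolynomial (Fin 3) ℂ} (hf : f.IsHomogeneous d)
    (w : Fin 5 → Pt 2) (hw : Function.Injective w) (hap : isApolar f (Set.range w)) :
    ∃ cc : Fin 5 → ℂ, f = ∑ i, C (cc i) * lin (w i).rep ^ d := by
  classical
  obtain ⟨U, hU⟩ := interp hd w hw
  have hdfac : (d.factorial : ℂ) ≠ 0 := Nat.cast_ne_zero.mpr (Nat.factorial_ne_zero d)
  set cc : Fin 5 → ℂ := fun i => (d.factorial : ℂ)⁻¹ * coeff 0 (apolar (U i) f) with hcc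
  refine ⟨cc, ?_⟩
  set g : MvPolynomial (Fin 3) ℂ := f - ∑ i, C (cc i) * lin (w i).rep ^ d with hg
  have hsumhom : ∀ i : Fin 5, (C (cc i) * lin (w i).rep ^ d).IsHomogeneous d := by
    intro i
    have h2 := (lin_isHomog (w i).rep).pow d
    rw [one_mul] at h2
    have h3 := (isHomogeneous_C (Fin 3) (cc i)).mul h2
    rwa [zero_add] at h3
  have hghom : g.IsHomogeneous d := hf.sub (IsHomogeneous.sum _ _ _ fun i _ => hsumhom i)
  have key : ∀ G : MvPolynomial (Fin 3) ℂ, G.IsHomogeneous d →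
      coeff 0 (apolar G g) = 0 := by
    intro G hG
    set R : MvPolynomial (Fin 3) ℂ := G - ∑ j, C (eval (w j).rep G) * U j with hR
    have hRhom : R.IsHomogeneous d :=
      hG.sub (IsHomogeneous.sum _ _ _ fun j _ => by
        have h3 := (isHomogeneous_C (Fin 3) (eval (w j).rep G)).mul (hU j).1
        rwa [zero_add] at h3)
    have hRvan : ∀ p ∈ Set.range w, eval p.rep R = 0 := by
      rintro p ⟨j, rfl⟩
      rw [hR, map_sub, map_sum]
      have hterm : ∀ j' : Fin 5, eval (w j).rep (C (eval (w j').rep G) * U j')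
          = if j = j' then eval (w j').rep G else 0 := by
        intro j'
        rw [map_mul, eval_C, (hU j').2 j, mul_ite, mul_one, mul_zero]
      rw [Finset.sum_congr rfl fun j' _ => hterm j',
        Finset.sum_ite_eq Finset.univ j (fun j' => eval (w j').rep G),
        if_pos (Finset.mem_univ j), sub_self]
    have hRmem : R ∈ vanishingIdeal (Set.range w) :=
      Ideal.subset_span ⟨⟨d, hRhom⟩, hRvan⟩
    have hRap : apolar R f = 0 := hap R hRmem
    have hGdec : G = R + ∑ j, C (eval (w j).rep G) * U j := by rw [hR, sub_add_cancel]
    have hGf : coeff 0 (apolar G f)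
        = ∑ j, eval (w j).rep G * ((d.factorial : ℂ) * cc j) := by
      conv_lhs => rw [hGdec]
      rw [apolar_add, hRap, zero_add]
      rw [Finset.sum_congr rfl (fun j _ => (smul_eq_C_mul (U j) (eval (w j).rep G)).symm),
        apolar_G_sum, coeff_sum]
      apply Finset.sum_congr rfl
      intro j _
      rw [apolar_smul, coeff_smul, smul_eq_mul, hcc]
      rw [← mul_assoc ((d.factorial : ℂ)) _ _, mul_inv_cancel₀ hdfac, one_mul]
    have hterm2 : ∀ i : Fin 5, coeff 0 (apolar G (C (cc i) * lin (w i).rep ^ d))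
        = cc i * ((d.factorial : ℂ) * eval (w i).rep G) := by
      intro i
      rw [← smul_eq_C_mul, apolar_f_smul, coeff_smul, smul_eq_mul,
        coeff0_apolar_linpow hG]
    rw [hg, apolar_f_sub, coeff_sub, apolar_f_sum, coeff_sum,
      Finset.sum_congr rfl (fun i _ => hterm2 i), hGf, ← Finset.sum_sub_distrib]
    apply Finset.sum_eq_zero
    intro i _
    ring
  exact (sub_eq_zero.mp (eq_zero_of_pairing_zero hghom key))
lemma exists_ne_pair5 {α : Type*} (c : Fin 5 → α)
    (h4 : ¬ ∃ i j k l : Fin 5, i ≠ j ∧ i ≠ k ∧ i ≠ l ∧ j ≠ k ∧ j ≠ l ∧ k ≠ l ∧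
      c i = c j ∧ c i = c k ∧ c i = c l) :
    ∃ i j : Fin 5, i ≠ j ∧ c i ≠ c j := by
  by_contra h
  push_neg at h
  have hall : ∀ i j : Fin 5, i ≠ j → c i = c j := fun i j hij => h i j hij
  exact h4 ⟨0, 1, 2, 3, by decide, by decide, by decide, by decide, by decide, by decide,
    hall 0 1 (by decide), hall 0 2 (by decide), hall 0 3 (by decide)⟩

lemma comb5 {α : Type*} (c : Fin 5 → α)
    (h4 : ¬ ∃ i j k l : Fin 5, i ≠ j ∧ i ≠ k ∧ i ≠ l ∧ j ≠ k ∧ j ≠ l ∧ k ≠ l ∧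
      c i = c j ∧ c i = c k ∧ c i = c l) :
    ∃ i j k l m : Fin 5, i ≠ j ∧ i ≠ k ∧ i ≠ l ∧ i ≠ m ∧ j ≠ k ∧ j ≠ l ∧ j ≠ m ∧
      k ≠ l ∧ k ≠ m ∧ l ≠ m ∧ c i ≠ c j ∧ c k ≠ c l := by
  classical
  obtain ⟨i, j, hij, hcij⟩ := exists_ne_pair5 c h4
  have hcard : (Finset.univ \ {i, j} : Finset (Fin 5)).card = 3 := by
    rw [Finset.card_sdiff_of_subset (Finset.subset_univ _), Finset.card_univ, Fintype.card_fin,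
      Finset.card_insert_of_notMem (by simpa using hij), Finset.card_singleton]
  obtain ⟨x, y, z, hxy, hxz, hyz, hs⟩ := Finset.card_eq_three.mp hcard
  have hmem : ∀ t : Fin 5, t ∈ ({x, y, z} : Finset (Fin 5)) → t ≠ i ∧ t ≠ j := by
    intro t ht
    rw [← hs, Finset.mem_sdiff] at ht
    constructor <;> intro he <;> subst he <;> exact ht.2 (by simp)
  obtain ⟨hxi, hxj⟩ := hmem x (by simp)
  obtain ⟨hyi, hyj⟩ := hmem y (by simp)
  obtain ⟨hzi, hzj⟩ := hmem z (by simp)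
  by_cases hcxy : c x = c y
  · by_cases hcxz : c x = c z
    · -- c x = c y = c z
      have hcix : c i ≠ c x := by
        intro he
        exact h4 ⟨x, y, z, i, hxy, hxz, hxi, hyz, hyi, hzi, hcxy, hcxz, he.symm⟩
      have hcjy : c j ≠ c y := by
        intro he
        exact h4 ⟨x, y, z, j, hxy, hxz, hxj, hyz, hyj, hzj, hcxy, hcxz, hcxy.trans he.symm⟩
      exact ⟨i, x, j, y, z, Ne.symm hxi, hij, Ne.symm hyi, Ne.symm hzi, hxj, hxy, hxz,
        Ne.symm hyj, Ne.symm hzj, hyz, hcix, hcjy⟩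
    · exact ⟨i, j, x, z, y, hij, Ne.symm hxi, Ne.symm hzi, Ne.symm hyi, Ne.symm hxj,
        Ne.symm hzj, Ne.symm hyj, hxz, hxy, Ne.symm hyz, hcij, hcxz⟩
  · exact ⟨i, j, x, y, z, hij, Ne.symm hxi, Ne.symm hyi, Ne.symm hzi, Ne.symm hxj,
      Ne.symm hyj, Ne.symm hzj, hxy, hxz, hyz, hcij, hcxy⟩

lemma comb4 {α : Type*} (c : Fin 4 → α)
    (h3 : ¬ ∃ i j k : Fin 4, i ≠ j ∧ i ≠ k ∧ j ≠ k ∧ c i = c j ∧ c i = c k) :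
    ∃ i j k l : Fin 4, i ≠ j ∧ i ≠ k ∧ i ≠ l ∧ j ≠ k ∧ j ≠ l ∧ k ≠ l ∧
      c i ≠ c j ∧ c k ≠ c l := by
  classical
  obtain ⟨i, j, hij, hcij⟩ : ∃ i j : Fin 4, i ≠ j ∧ c i ≠ c j := by
    by_contra h
    push_neg at h
    exact h3 ⟨0, 1, 2, by decide, by decide, by decide,
      h 0 1 (by decide), h 0 2 (by decide)⟩
  have hcard : (Finset.univ \ {i, j} : Finset (Fin 4)).card = 2 := by
    rw [Finset.card_sdiff_of_subset (Finset.subset_univ _), Finset.card_univ, Fintype.card_fin,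
      Finset.card_insert_of_notMem (by simpa using hij), Finset.card_singleton]
  obtain ⟨x, y, hxy, hs⟩ := Finset.card_eq_two.mp hcard
  have hmem : ∀ t : Fin 4, t ∈ ({x, y} : Finset (Fin 4)) → t ≠ i ∧ t ≠ j := by
    intro t ht
    rw [← hs, Finset.mem_sdiff] at ht
    constructor <;> intro he <;> subst he <;> exact ht.2 (by simp)
  obtain ⟨hxi, hxj⟩ := hmem x (by simp)
  obtain ⟨hyi, hyj⟩ := hmem y (by simp)
  by_cases hcxy : c x = c y
  · have hcix : c i ≠ c x := by
      intro he
      exact h3 ⟨x, y, i, hxy, hxi, hyi, hcxy, he.symm⟩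
    have hcjy : c j ≠ c y := by
      intro he
      exact h3 ⟨x, y, j, hxy, hxj, hyj, hcxy, hcxy.trans he.symm⟩
    exact ⟨i, x, j, y, Ne.symm hxi, hij, Ne.symm hyi, hxj, hxy, Ne.symm hyj, hcix, hcjy⟩
  · exact ⟨i, j, x, y, hij, Ne.symm hxi, Ne.symm hyi, Ne.symm hxj, Ne.symm hyj,
      hxy, hcij, hcxy⟩
lemma class_fun {k : ℕ} (z : Pt 2) (w : Fin k → Pt 2) (hne : ∀ i, w i ≠ z) :
    ∃ c : Fin k → Fin k, ∀ i j, c i = c j ↔ rel z (w i) (w j) := by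
  classical
  have hrefl : ∀ i, rel z (w i) (w i) := fun i => rel_refl z (w i)
  set S : Fin k → Finset (Fin k) :=
    fun i => Finset.univ.filter (fun j => rel z (w i) (w j)) with hS
  have hSmem : ∀ i j, j ∈ S i ↔ rel z (w i) (w j) := by intro i j; simp [hS]
  have hSne : ∀ i, (S i).Nonempty := fun i => ⟨i, (hSmem i i).mpr (hrefl i)⟩
  have hSeq : ∀ i j, rel z (w i) (w j) → S i = S j := by
    intro i j hij
    ext t
    rw [hSmem, hSmem]
    exact ⟨fun h => rel_trans (rel_symm (hne j) hij) h, fun h => rel_trans hij h⟩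
  refine ⟨fun i => (S i).min' (hSne i), fun i j => ⟨fun h => ?_, fun h => ?_⟩⟩
  · have h1 : rel z (w i) (w ((S i).min' (hSne i))) := (hSmem i _).mp ((S i).min'_mem _)
    have h2 : rel z (w j) (w ((S j).min' (hSne j))) := (hSmem j _).mp ((S j).min'_mem _)
    have h' : (S i).min' (hSne i) = (S j).min' (hSne j) := h
    rw [← h'] at h2
    exact rel_trans h1 (rel_symm (hne _) h2)
  · have he := hSeq i j h
    simp only [he]

lemma single_of_degree_one (α : Fin 3 →₀ ℕ) (h : α.degree = 1) :
    ∃ i, α = Finsupp.single i 1 := by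
  rw [degree_univ] at h
  have hex : ∃ i, α i ≠ 0 := by
    by_contra hc
    push_neg at hc
    rw [Finset.sum_congr rfl fun i _ => hc i] at h
    simp at h
  obtain ⟨i, hi⟩ := hex
  have hle : α i ≤ 1 := h ▸ Finset.single_le_sum (fun j _ => Nat.zero_le (α j))
    (Finset.mem_univ i)
  have hai : α i = 1 := le_antisymm hle (Nat.one_le_iff_ne_zero.mpr hi)
  have hrest : ∑ j ∈ Finset.univ.erase i, α j = 0 := by
    have := Finset.add_sum_erase Finset.univ α (Finset.mem_univ i)
    omega
  refine ⟨i, Finsupp.ext fun j => ?_⟩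
  by_cases hj : j = i
  · subst hj; rw [hai, Finsupp.single_eq_same]
  · rw [Finsupp.single_eq_of_ne' (fun he => hj he.symm)]
    exact (Finset.sum_eq_zero_iff.mp hrest) j
      (Finset.mem_erase.mpr ⟨hj, Finset.mem_univ j⟩)

lemma homog1_le_span :
    (homogeneousSubmodule (Fin 3) ℂ 1 : Submodule ℂ (MvPolynomial (Fin 3) ℂ)) ≤
      Submodule.span ℂ ({X 0, X 1, X 2} : Set (MvPolynomial (Fin 3) ℂ)) := by
  intro G hG
  rw [mem_homogeneousSubmodule] at hG
  rw [as_sum G]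
  apply Submodule.sum_mem
  intro α hα
  have hdeg : α.degree = 1 := by
    have h1 := hG (MvPolynomial.mem_support_iff.mp hα)
    rwa [Pi.one_def, ← Finsupp.degree_eq_weight_one] at h1
  obtain ⟨i, rfl⟩ := single_of_degree_one α hdeg
  have hXi : monomial (Finsupp.single i 1) (coeff (Finsupp.single i 1) G)
      = coeff (Finsupp.single i 1) G • X i := by
    rw [smul_eq_C_mul, X, C_mul_monomial, mul_one]
  rw [hXi]
  exact Submodule.smul_mem _ _ (Submodule.subset_span (by fin_cases i <;> simp))

lemma hf_contra {f : MvPolynomial (Fin 3) ℂ} (hconc : HF f 1 = 3)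
    {L : MvPolynomial (Fin 3) ℂ} (hL1 : L.IsHomogeneous 1) (hL0 : L ≠ 0)
    (hap : apolar L f = 0) : False := by
  have hperp : L ∈ perpSub f 1 := ⟨hL1, hap⟩
  have hle1 : perpSub f 1 ≤ homogeneousSubmodule (Fin 3) ℂ 1 :=
    fun x hx => (mem_homogeneousSubmodule 1 x).mpr hx.1
  have hfdspan : FiniteDimensional ℂ
      (Submodule.span ℂ ({X 0, X 1, X 2} : Set (MvPolynomial (Fin 3) ℂ))) :=
    FiniteDimensional.span_of_finite ℂ (Set.toFinite _)
  have hfd1 : FiniteDimensional ℂ (homogeneousSubmodule (Fin 3) ℂ 1) :=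
    Submodule.finiteDimensional_of_le homog1_le_span
  have hfd2 : FiniteDimensional ℂ (perpSub f 1) :=
    Submodule.finiteDimensional_of_le (hle1.trans homog1_le_span)
  have hcard : ({X 0, X 1, X 2} : Set (MvPolynomial (Fin 3) ℂ)).toFinset.card ≤ 3 := by
    rw [Set.toFinset_insert, Set.toFinset_insert, Set.toFinset_singleton]
    have h1 := Finset.card_insert_le (X 1) ({X 2} : Finset (MvPolynomial (Fin 3) ℂ))
    have h2 := Finset.card_insert_le (X 0)
      (insert (X 1) ({X 2} : Finset (MvPolynomial (Fin 3) ℂ)))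
    simp only [Finset.card_singleton] at h1
    omega
  have h3 : Module.finrank ℂ (homogeneousSubmodule (Fin 3) ℂ 1) ≤ 3 :=
    le_trans (Submodule.finrank_mono homog1_le_span)
      (le_trans (finrank_span_le_card (R := ℂ) _) hcard)
  have hpos : 0 < Module.finrank ℂ (perpSub f 1) := by
    have hnt : Nontrivial (perpSub f 1) :=
      nontrivial_of_ne ⟨L, hperp⟩ 0 (fun h => hL0 (by simpa using Subtype.ext_iff.mp h))
    exact Module.finrank_pos
  rw [HF] at hconc
  omega

lemma enum_B {B : Set (Pt 2)} (hfin : B.Finite) (hcard : B.ncard = 5) :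
    ∃ qq : Fin 5 → Pt 2, Function.Injective qq ∧ Set.range qq = B := by
  classical
  have hc : hfin.toFinset.card = 5 := by
    rw [← Set.ncard_eq_toFinset_card B hfin, hcard]
  set e := Finset.equivFinOfCardEq hc
  refine ⟨fun k => (e.symm k).1, fun a b h => e.symm.injective (Subtype.ext h), ?_⟩
  ext p
  constructor
  · rintro ⟨k, rfl⟩
    have := (e.symm k).2
    rwa [Set.Finite.mem_toFinset] at this
  · intro hp
    exact ⟨e ⟨p, (Set.Finite.mem_toFinset hfin).mpr hp⟩, by simp⟩

lemma lin_smul {n : ℕ} (z : ℂ) (u : Fin (n + 1) → ℂ) : lin (z • u) = C z * lin u := by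
  rw [lin, lin, Finset.mul_sum]
  apply Finset.sum_congr rfl
  intro i _
  rw [Pi.smul_apply, smul_eq_mul, map_mul, mul_assoc]

lemma wrank_le {n d r : ℕ} (f : MvPolynomial (Fin (n + 1)) ℂ)
    (v : Fin r → (Fin (n + 1) → ℂ)) (h : f = ∑ i, lin (v i) ^ d) : wrank d f ≤ r :=
  Nat.sInf_le ⟨v, h⟩

lemma coeffs_ne_zero {d : ℕ} (hd : 0 < d) {f : MvPolynomial (Fin 3) ℂ}
    (hrk : wrank d f = 5) {w : Fin 5 → Pt 2} {cc : Fin 5 → ℂ}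
    (hdec : f = ∑ i, C (cc i) * lin (w i).rep ^ d) : ∀ i, cc i ≠ 0 := by
  classical
  intro i0 h0
  choose z hzz using fun i : Fin 5 => IsAlgClosed.exists_pow_nat_eq (cc i) hd
  have hcard : (Finset.univ.erase i0).card = 4 := by
    rw [Finset.card_erase_of_mem (Finset.mem_univ _), Finset.card_univ, Fintype.card_fin]
  set e := Finset.equivFinOfCardEq hcard
  set v : Fin 4 → (Fin 3 → ℂ) := fun k => z (e.symm k).1 • (w ((e.symm k).1)).rep with hv
  have hsum : f = ∑ k : Fin 4, lin (v k) ^ d := by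
    rw [hdec, ← Finset.sum_erase_add _ _ (Finset.mem_univ i0), h0, map_zero, zero_mul,
      add_zero, ← Finset.sum_coe_sort (Finset.univ.erase i0)
        (fun i => C (cc i) * lin (w i).rep ^ d),
      ← Equiv.sum_comp e.symm (fun x : {x // x ∈ Finset.univ.erase i0} =>
        C (cc x.1) * lin (w x.1).rep ^ d)]
    apply Finset.sum_congr rfl
    intro k _
    rw [hv, lin_smul, mul_pow, ← map_pow, hzz]
  exact absurd (wrank_le f v hsum) (by rw [hrk]; omega)
lemma fin5_others (t : Fin 5) : ∃ a b c e : Fin 5, a ≠ b ∧ a ≠ c ∧ a ≠ e ∧ b ≠ c ∧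
    b ≠ e ∧ c ≠ e ∧ a ≠ t ∧ b ≠ t ∧ c ≠ t ∧ e ≠ t := by
  fin_cases t
  · exact ⟨1, 2, 3, 4, by decide, by decide, by decide, by decide, by decide, by decide,
      by decide, by decide, by decide, by decide⟩
  · exact ⟨0, 2, 3, 4, by decide, by decide, by decide, by decide, by decide, by decide,
      by decide, by decide, by decide, by decide⟩
  · exact ⟨0, 1, 3, 4, by decide, by decide, by decide, by decide, by decide, by decide,
      by decide, by decide, by decide, by decide⟩
  · exact ⟨0, 1, 2, 4, by decide, by decide, by decide, by decide, by decide, by decide,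
      by decide, by decide, by decide, by decide⟩
  · exact ⟨0, 1, 2, 3, by decide, by decide, by decide, by decide, by decide, by decide,
      by decide, by decide, by decide, by decide⟩

lemma fin5_cover {i j k l m : Fin 5} (hij : i ≠ j) (hik : i ≠ k) (hil : i ≠ l)
    (him : i ≠ m) (hjk : j ≠ k) (hjl : j ≠ l) (hjm : j ≠ m) (hkl : k ≠ l) (hkm : k ≠ m)
    (hlm : l ≠ m) : ∀ t : Fin 5, t = i ∨ t = j ∨ t = k ∨ t = l ∨ t = m := by
  intro t
  by_contra hcon
  push_neg at hcon
  obtain ⟨h1, h2, h3, h4, h5⟩ := hcon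
  have c1 : ({m} : Finset (Fin 5)).card = 1 := rfl
  have c2 : (insert l ({m} : Finset (Fin 5))).card = 2 := by
    rw [Finset.card_insert_of_notMem (by simp [hlm]), c1]
  have c3 : (insert k (insert l ({m} : Finset (Fin 5)))).card = 3 := by
    rw [Finset.card_insert_of_notMem (by simp [hkl, hkm]), c2]
  have c4 : (insert j (insert k (insert l ({m} : Finset (Fin 5))))).card = 4 := by
    rw [Finset.card_insert_of_notMem (by simp [hjk, hjl, hjm]), c3]
  have c5 : (insert i (insert j (insert k (insert l ({m} : Finset (Fin 5)))))).card = 5 := by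
    rw [Finset.card_insert_of_notMem (by simp [hij, hik, hil, him]), c4]
  have c6 : (insert t (insert i (insert j (insert k (insert l
      ({m} : Finset (Fin 5))))))).card = 6 := by
    rw [Finset.card_insert_of_notMem (by simp [h1, h2, h3, h4, h5]), c5]
  have hle := Finset.card_le_univ (insert t (insert i (insert j (insert k (insert l
      ({m} : Finset (Fin 5)))))))
  rw [c6, Fintype.card_fin] at hle
  omega

lemma fin4_cover {i j k l : Fin 4} (hij : i ≠ j) (hik : i ≠ k) (hil : i ≠ l)
    (hjk : j ≠ k) (hjl : j ≠ l) (hkl : k ≠ l) :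
    ∀ t : Fin 4, t = i ∨ t = j ∨ t = k ∨ t = l := by
  intro t
  by_contra hcon
  push_neg at hcon
  obtain ⟨h1, h2, h3, h4⟩ := hcon
  have c1 : ({l} : Finset (Fin 4)).card = 1 := rfl
  have c2 : (insert k ({l} : Finset (Fin 4))).card = 2 := by
    rw [Finset.card_insert_of_notMem (by simp [hkl]), c1]
  have c3 : (insert j (insert k ({l} : Finset (Fin 4)))).card = 3 := by
    rw [Finset.card_insert_of_notMem (by simp [hjk, hjl]), c2]
  have c4 : (insert i (insert j (insert k ({l} : Finset (Fin 4))))).card = 4 := by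
    rw [Finset.card_insert_of_notMem (by simp [hij, hik, hil]), c3]
  have c5 : (insert t (insert i (insert j (insert k ({l} : Finset (Fin 4)))))).card = 5 := by
    rw [Finset.card_insert_of_notMem (by simp [h1, h2, h3, h4]), c4]
  have hle := Finset.card_le_univ (insert t (insert i (insert j (insert k
      ({l} : Finset (Fin 4))))))
  rw [c5, Fintype.card_fin] at hle
  omega

/-- pairing a sum of `d`-th powers against a degree-`m` form. -/
lemma hpairgen (m : ℕ) (ww : Fin 5 → Pt 2) (c : Fin 5 → ℂ)
    (G : MvPolynomial (Fin 3) ℂ) (hG : G.IsHomogeneous m) :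
    coeff 0 (apolar G (∑ i, C (c i) * lin (ww i).rep ^ m))
      = ∑ i, c i * ((m.factorial : ℂ) * eval (ww i).rep G) := by
  rw [apolar_f_sum, coeff_sum]
  apply Finset.sum_congr rfl
  intro i _
  rw [← smul_eq_C_mul, apolar_f_smul, coeff_smul, smul_eq_mul, coeff0_apolar_linpow hG]

/-- applying a linear form to a sum of `d`-th powers. -/
lemma lin1_apply_sum (d : ℕ) (ww : Fin 5 → Pt 2) (c : Fin 5 → ℂ)
    {L : MvPolynomial (Fin 3) ℂ} (hL : L.IsHomogeneous 1) :
    apolar L (∑ i, C (c i) * lin (ww i).rep ^ d)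
      = ∑ i, C (c i * (d : ℂ) * eval (ww i).rep L) * lin (ww i).rep ^ (d - 1) := by
  rw [apolar_f_sum]
  apply Finset.sum_congr rfl
  intro i _
  rw [← smul_eq_C_mul, apolar_f_smul, apolar_homog_linpow hL,
    Nat.descFactorial_one, smul_eq_C_mul, ← mul_assoc, ← map_mul, ← mul_assoc]
end Stmt18Aux
open Stmt18Aux in
theorem stmt18 {d : ℕ} (hd : 5 ≤ d) (f : MvPolynomial (Fin 3) ℂ) (hf : f.IsHomogeneous d)
    (hconc : HF f 1 = 3) (hrk : wrank d f = 5)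
    (Q : Fin 5 → Pt 2) (hQinj : Function.Injective Q)
    (hmin : isMinApolar d f (Set.range Q))
    (hgen : ∀ i j k l : Fin 5, i ≠ j → i ≠ k → i ≠ l → j ≠ k → j ≠ l → k ≠ l →
      ¬∃ L : MvPolynomial (Fin 3) ℂ, L.IsHomogeneous 1 ∧ L ≠ 0 ∧
        eval (Q i).rep L = 0 ∧ eval (Q j).rep L = 0 ∧
        eval (Q k).rep L = 0 ∧ eval (Q l).rep L = 0) :
    ∀ B : Set (Pt 2), isMinApolar d f B → B = Set.range Q := by
  classical
  intro B hB
  obtain ⟨hBfin, hBap, hBcard⟩ := hB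
  obtain ⟨hXfin, hXap, hXcard⟩ := hmin
  rw [hrk] at hBcard hXcard
  obtain ⟨qq, hqinj, hqrange⟩ := enum_B hBfin hBcard
  have hd4 : 4 ≤ d := by omega
  have hd0 : 0 < d := by omega
  have hdfac : (d.factorial : ℂ) ≠ 0 := Nat.cast_ne_zero.mpr (Nat.factorial_ne_zero _)
  have hdfac1 : ((d - 1).factorial : ℂ) ≠ 0 := Nat.cast_ne_zero.mpr (Nat.factorial_ne_zero _)
  have hdC : (d : ℂ) ≠ 0 := Nat.cast_ne_zero.mpr (by omega)
  obtain ⟨cX, hcX⟩ := decomp hd4 hf Q hQinj hXap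
  have hqap : isApolar f (Set.range qq) := by rw [hqrange]; exact hBap
  obtain ⟨cB, hcB⟩ := decomp hd4 hf qq hqinj hqap
  have hcXne := coeffs_ne_zero hd0 hrk hcX
  have hcBne := coeffs_ne_zero hd0 hrk hcB
  by_cases hbad : ∃ L : MvPolynomial (Fin 3) ℂ, L.IsHomogeneous 1 ∧ L ≠ 0 ∧
      ∃ i j k l : Fin 5, i ≠ j ∧ i ≠ k ∧ i ≠ l ∧ j ≠ k ∧ j ≠ l ∧ k ≠ l ∧
        eval (qq i).rep L = 0 ∧ eval (qq j).rep L = 0 ∧ eval (qq k).rep L = 0 ∧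
        eval (qq l).rep L = 0
  · exfalso
    obtain ⟨L, hL1, hL0, bi, bj, bk, bl, hij, hik, hil, hjk, hjl, hkl,
      hvi, hvj, hvk, hvl⟩ := hbad
    by_cases hall : ∀ t : Fin 5, eval (qq t).rep L = 0
    · have hLmem : L ∈ vanishingIdeal (Set.range qq) :=
        Ideal.subset_span ⟨⟨1, hL1⟩, by rintro p ⟨t, rfl⟩; exact hall t⟩
      exact hf_contra hconc hL1 hL0 (hqap L hLmem)
    push_neg at hall
    obtain ⟨t0, ht0⟩ := hall
    have ht0i : t0 ≠ bi := fun h => ht0 (h ▸ hvi)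
    have ht0j : t0 ≠ bj := fun h => ht0 (h ▸ hvj)
    have ht0k : t0 ≠ bk := fun h => ht0 (h ▸ hvk)
    have ht0l : t0 ≠ bl := fun h => ht0 (h ▸ hvl)
    have hzero : ∀ t, t ≠ t0 → eval (qq t).rep L = 0 := by
      intro t ht
      rcases fin5_cover hij hik hil (Ne.symm ht0i) hjk hjl (Ne.symm ht0j) hkl
        (Ne.symm ht0k) (Ne.symm ht0l) t with rfl | rfl | rfl | rfl | rfl
      · exact hvi
      · exact hvj
      · exact hvk
      · exact hvl
      · exact absurd rfl ht
    set γB : Fin 5 → ℂ := fun t => cB t * (d : ℂ) * eval (qq t).rep L with hγB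
    set γX : Fin 5 → ℂ := fun p => cX p * (d : ℂ) * eval (Q p).rep L with hγX
    have hEq : (∑ t, C (γB t) * lin (qq t).rep ^ (d - 1))
        = ∑ p, C (γX p) * lin (Q p).rep ^ (d - 1) := by
      rw [← lin1_apply_sum d qq cB hL1, ← lin1_apply_sum d Q cX hL1, ← hcB, ← hcX]
    by_cases hq4 : ∃ istar, Q istar = qq t0
    · obtain ⟨istar, histar⟩ := hq4
      obtain ⟨pstar, hpsne, hpsL⟩ : ∃ pstar, pstar ≠ istar ∧ eval (Q pstar).rep L ≠ 0 := by
        by_contra hcon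
        push_neg at hcon
        obtain ⟨a, b, c, e, hab, hac, hae, hbc, hbe, hce, hat, hbt, hct, het⟩ :=
          fin5_others istar
        exact hgen a b c e hab hac hae hbc hbe hce
          ⟨L, hL1, hL0, hcon a hat, hcon b hbt, hcon c hct, hcon e het⟩
      have hsep : ∀ p : Fin 5, ∃ a : Fin 3 → ℂ, p ≠ pstar →
          eval (Q pstar).rep (lin a) = 1 ∧ eval (Q p).rep (lin a) = 0 := by
        intro p
        by_cases h : p = pstar
        · exact ⟨0, fun h' => absurd h h'⟩
        · exact (sep_line (fun he : Q pstar = Q p => h (hQinj he.symm))).imp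
            fun a ha => fun _ => ha
      choose sp hsp using hsep
      obtain ⟨mu, hmu⟩ := unit_line (Q pstar)
      set G' : MvPolynomial (Fin 3) ℂ :=
        (∏ p ∈ Finset.univ.erase pstar, lin (sp p)) * lin mu ^ (d - 5) with hG'
      have hG'hom : G'.IsHomogeneous (d - 1) := by
        have h1 : (∏ p ∈ Finset.univ.erase pstar, lin (sp p)).IsHomogeneous
            (∑ _p ∈ Finset.univ.erase pstar, 1) :=
          IsHomogeneous.prod _ _ _ (fun p _ => lin_isHomog _)
        have hcard : (∑ _p ∈ Finset.univ.erase pstar, 1) = 4 := by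
          rw [Finset.sum_const, smul_eq_mul, mul_one,
            Finset.card_erase_of_mem (Finset.mem_univ _), Finset.card_univ, Fintype.card_fin]
        rw [hcard] at h1
        have h2 : (lin mu ^ (d - 5)).IsHomogeneous (d - 5) := by
          have := (lin_isHomog mu).pow (d - 5)
          rwa [one_mul] at this
        have h3 := h1.mul h2
        have harith : 4 + (d - 5) = d - 1 := by omega
        rwa [harith] at h3
      have hG'p : ∀ p, p ≠ pstar → eval (Q p).rep G' = 0 := by
        intro p hp
        rw [hG', map_mul, map_prod,
          Finset.prod_eq_zero (Finset.mem_erase.mpr ⟨hp, Finset.mem_univ p⟩)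
            (hsp p hp).2, zero_mul]
      have hG'ps : eval (Q pstar).rep G' = 1 := by
        rw [hG', map_mul, map_prod, map_pow, hmu, one_pow, mul_one, Finset.prod_eq_one]
        intro p hp
        exact (hsp p (Finset.mem_erase.mp hp).1).1
      have hp1 := hpairgen (d - 1) qq γB G' hG'hom
      have hp2 := hpairgen (d - 1) Q γX G' hG'hom
      have heq3 : (∑ t, γB t * (((d - 1).factorial : ℂ) * eval (qq t).rep G'))
          = ∑ p, γX p * (((d - 1).factorial : ℂ) * eval (Q p).rep G') := by
        rw [← hp1, ← hp2, hEq]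
      have hLHS : (∑ t, γB t * (((d - 1).factorial : ℂ) * eval (qq t).rep G')) = 0 := by
        apply Finset.sum_eq_zero
        intro t _
        by_cases ht : t = t0
        · subst ht
          have : eval (qq t).rep G' = 0 := by
            rw [← histar]
            exact hG'p istar (Ne.symm hpsne)
          rw [this, mul_zero, mul_zero]
        · rw [hγB]
          simp only []
          rw [hzero t ht, mul_zero, zero_mul]
      have hRHS : (∑ p, γX p * (((d - 1).factorial : ℂ) * eval (Q p).rep G'))
          = γX pstar * ((d - 1).factorial : ℂ) := by
        rw [Finset.sum_eq_single pstar]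
        · rw [hG'ps, mul_one]
        · intro p _ hp
          rw [hG'p p hp, mul_zero, mul_zero]
        · intro h
          exact absurd (Finset.mem_univ pstar) h
      rw [hLHS, hRHS] at heq3
      have hγXps : γX pstar ≠ 0 := by
        rw [hγX]
        simp only []
        exact mul_ne_zero (mul_ne_zero (hcXne pstar) hdC) hpsL
      exact hγXps (by
        rcases mul_eq_zero.mp heq3.symm with h | h
        · exact h
        · exact absurd h hdfac1)
    · push_neg at hq4
      have hcross : ∃ i1 j1 : Fin 5, ¬ rel (qq t0) (Q i1) (Q j1) := by
        by_contra hcon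
        push_neg at hcon
        obtain ⟨L2, hL21, hL20, hv1, hv2, hv3, hv4, _⟩ :=
          line_through_four (hcon 0 1) (hcon 0 2) (hcon 0 3)
        exact hgen 0 1 2 3 (by decide) (by decide) (by decide) (by decide) (by decide)
          (by decide) ⟨L2, hL21, hL20, hv1, hv2, hv3, hv4⟩
      obtain ⟨i1, j1, hnr⟩ := hcross
      have hi1j1 : i1 ≠ j1 := fun h => hnr (h ▸ rel_refl _ _)
      obtain ⟨b1, hb1z, hb1i, hb1j⟩ := cross_line (hq4 i1) hnr
      have hsep : ∀ p : Fin 5, ∃ a : Fin 3 → ℂ,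
          eval (qq t0).rep (lin a) = 1 ∧ eval (Q p).rep (lin a) = 0 :=
        fun p => sep_line (Ne.symm (hq4 p))
      choose sp hsp1 hsp0 using hsep
      obtain ⟨mu, hmu⟩ := unit_line (qq t0)
      set G' : MvPolynomial (Fin 3) ℂ := lin b1 *
        ((∏ p ∈ (Finset.univ.erase i1).erase j1, lin (sp p)) * lin mu ^ (d - 5)) with hG'
      have hG'hom : G'.IsHomogeneous (d - 1) := by
        have h1 : (∏ p ∈ (Finset.univ.erase i1).erase j1, lin (sp p)).IsHomogeneous
            (∑ _p ∈ (Finset.univ.erase i1).erase j1, 1) :=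
          IsHomogeneous.prod _ _ _ (fun p _ => lin_isHomog _)
        have hcard : (∑ _p ∈ (Finset.univ.erase i1).erase j1, 1) = 3 := by
          rw [Finset.sum_const, smul_eq_mul, mul_one,
            Finset.card_erase_of_mem
              (Finset.mem_erase.mpr ⟨Ne.symm hi1j1, Finset.mem_univ j1⟩),
            Finset.card_erase_of_mem (Finset.mem_univ _), Finset.card_univ,
            Fintype.card_fin]
        rw [hcard] at h1
        have h2 : (lin mu ^ (d - 5)).IsHomogeneous (d - 5) := by
          have := (lin_isHomog mu).pow (d - 5)
          rwa [one_mul] at this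
        have h3 := (lin_isHomog b1).mul (h1.mul h2)
        have harith : 1 + (3 + (d - 5)) = d - 1 := by omega
        rwa [harith] at h3
      have hG'p : ∀ p : Fin 5, eval (Q p).rep G' = 0 := by
        intro p
        by_cases hp1 : p = i1
        · subst hp1
          rw [hG', map_mul, hb1i, zero_mul]
        by_cases hp2 : p = j1
        · subst hp2
          rw [hG', map_mul, hb1j, zero_mul]
        rw [hG', map_mul, map_mul, map_prod,
          Finset.prod_eq_zero (Finset.mem_erase.mpr ⟨hp2,
            Finset.mem_erase.mpr ⟨hp1, Finset.mem_univ p⟩⟩) (hsp0 p), zero_mul, mul_zero]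
      have hG't0 : eval (qq t0).rep G' = 1 := by
        rw [hG', map_mul, map_mul, map_prod, map_pow, hb1z, hmu, one_pow, mul_one, one_mul,
          Finset.prod_eq_one]
        intro p _
        exact hsp1 p
      have hp1' := hpairgen (d - 1) qq γB G' hG'hom
      have hp2' := hpairgen (d - 1) Q γX G' hG'hom
      have heq3 : (∑ t, γB t * (((d - 1).factorial : ℂ) * eval (qq t).rep G'))
          = ∑ p, γX p * (((d - 1).factorial : ℂ) * eval (Q p).rep G') := by
        rw [← hp1', ← hp2', hEq]
      have hRHS : (∑ p, γX p * (((d - 1).factorial : ℂ) * eval (Q p).rep G')) = 0 := by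
        apply Finset.sum_eq_zero
        intro p _
        rw [hG'p p, mul_zero, mul_zero]
      have hLHS : (∑ t, γB t * (((d - 1).factorial : ℂ) * eval (qq t).rep G'))
          = γB t0 * ((d - 1).factorial : ℂ) := by
        rw [Finset.sum_eq_single t0]
        · rw [hG't0, mul_one]
        · intro t _ ht
          rw [hγB]
          simp only []
          rw [hzero t ht, mul_zero, zero_mul]
        · intro h
          exact absurd (Finset.mem_univ t0) h
      rw [hLHS, hRHS] at heq3
      have hγBt0 : γB t0 ≠ 0 := by
        rw [hγB]
        simp only []
        exact mul_ne_zero (mul_ne_zero (hcBne t0) hdC) ht0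
      exact hγBt0 (by
        rcases mul_eq_zero.mp heq3 with h | h
        · exact h
        · exact absurd h hdfac1)
  · -- main case: every point of B is a point of X
    have hsub : ∀ t0 : Fin 5, qq t0 ∈ Set.range Q := by
      intro t0
      by_contra hq0
      have hneQ : ∀ i, Q i ≠ qq t0 := fun i h => hq0 ⟨i, h⟩
      -- X-side lines
      obtain ⟨c, hc⟩ := class_fun (qq t0) Q hneQ
      have h4 : ¬ ∃ i j k l : Fin 5, i ≠ j ∧ i ≠ k ∧ i ≠ l ∧ j ≠ k ∧ j ≠ l ∧ k ≠ l ∧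
          c i = c j ∧ c i = c k ∧ c i = c l := by
        rintro ⟨i, j, k, l, hij, hik, hil, hjk, hjl, hkl, e1, e2, e3⟩
        obtain ⟨L, hL1, hL0, hv1, hv2, hv3, hv4, _⟩ :=
          line_through_four ((hc i j).mp e1) ((hc i k).mp e2) ((hc i l).mp e3)
        exact hgen i j k l hij hik hil hjk hjl hkl ⟨L, hL1, hL0, hv1, hv2, hv3, hv4⟩
      obtain ⟨i, j, k, l, m, hij, hik, hil, him, hjk, hjl, hjm, hkl, hkm, hlm,
        hcij, hckl⟩ := comb5 c h4
      obtain ⟨a1, ha1z, ha1i, ha1j⟩ :=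
        cross_line (hneQ i) (fun hr => hcij ((hc i j).mpr hr))
      obtain ⟨a2, ha2z, ha2k, ha2l⟩ :=
        cross_line (hneQ k) (fun hr => hckl ((hc k l).mpr hr))
      obtain ⟨a3, ha3z, ha3m⟩ := sep_line (Ne.symm (hneQ m))
      -- B-side lines
      have hcard4 : (Finset.univ.erase t0).card = 4 := by
        rw [Finset.card_erase_of_mem (Finset.mem_univ _), Finset.card_univ, Fintype.card_fin]
      set e4 := Finset.equivFinOfCardEq hcard4 with he4
      set emb : Fin 4 → Fin 5 := fun k' => (e4.symm k').1 with hemb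
      have hembne : ∀ k', emb k' ≠ t0 := fun k' => (Finset.mem_erase.mp (e4.symm k').2).1
      have hembinj : Function.Injective emb := fun a b h => e4.symm.injective (Subtype.ext h)
      set w' : Fin 4 → Pt 2 := fun k' => qq (emb k') with hw'
      have hw'ne : ∀ k', w' k' ≠ qq t0 := fun k' h => hembne k' (hqinj h)
      obtain ⟨c', hc'⟩ := class_fun (qq t0) w' hw'ne
      have h3' : ¬ ∃ u v s : Fin 4, u ≠ v ∧ u ≠ s ∧ v ≠ s ∧ c' u = c' v ∧ c' u = c' s := by
        rintro ⟨u, v, s, huv, hus, hvs, e1, e2⟩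
        obtain ⟨L, hL1, hL0, hb1, hb2, hb3, _, hbz⟩ :=
          line_through_four ((hc' u v).mp e1) ((hc' u s).mp e2) ((hc' u v).mp e1)
        exact hbad ⟨L, hL1, hL0, emb u, emb v, emb s, t0,
          fun h => huv (hembinj h), fun h => hus (hembinj h), hembne u,
          fun h => hvs (hembinj h), hembne v, hembne s, hb1, hb2, hb3, hbz⟩
      obtain ⟨u, v, s, t, huv, hus, hut, hvs, hvt, hst, hcuv, hcst⟩ := comb4 c' h3'
      obtain ⟨a4, ha4z, ha4u, ha4v⟩ :=
        cross_line (hw'ne u) (fun hr => hcuv ((hc' u v).mpr hr))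
      obtain ⟨a5, ha5z, ha5s, ha5t⟩ :=
        cross_line (hw'ne s) (fun hr => hcst ((hc' s t).mpr hr))
      obtain ⟨mu, hmu⟩ := unit_line (qq t0)
      set G : MvPolynomial (Fin 3) ℂ :=
        lin a1 * (lin a2 * (lin a3 * (lin a4 * (lin a5 * lin mu ^ (d - 5))))) with hG
      have hGhom : G.IsHomogeneous d := by
        have h5 : (lin mu ^ (d - 5)).IsHomogeneous (d - 5) := by
          have := (lin_isHomog mu).pow (d - 5)
          rwa [one_mul] at this
        have hh := (lin_isHomog a1).mul ((lin_isHomog a2).mul ((lin_isHomog a3).mul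
          ((lin_isHomog a4).mul ((lin_isHomog a5).mul h5))))
        have harith : 1 + (1 + (1 + (1 + (1 + (d - 5))))) = d := by omega
        rwa [harith] at hh
      have hGQ : ∀ p : Fin 5, eval (Q p).rep G = 0 := by
        intro p
        rcases fin5_cover hij hik hil him hjk hjl hjm hkl hkm hlm p with
          rfl | rfl | rfl | rfl | rfl
        · simp [hG, ha1i]
        · simp [hG, ha1j]
        · simp [hG, ha2k]
        · simp [hG, ha2l]
        · simp [hG, ha3m]
      have hGB : ∀ t', t' ≠ t0 → eval (qq t').rep G = 0 := by
        intro t' ht'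
        have htmem : t' ∈ Finset.univ.erase t0 :=
          Finset.mem_erase.mpr ⟨ht', Finset.mem_univ t'⟩
        have hembk : emb (e4 ⟨t', htmem⟩) = t' := by
          simp only [hemb]
          simp
        have hqw : qq t' = w' (e4 ⟨t', htmem⟩) := by
          simp only [hw']
          rw [hembk]
        rw [hqw]
        rcases fin4_cover huv hus hut hvs hvt hst (e4 ⟨t', htmem⟩) with heq | heq | heq | heq <;>
          rw [heq]
        · simp [hG, ha4u]
        · simp [hG, ha4v]
        · simp [hG, ha5s]
        · simp [hG, ha5t]
      have hGz : eval (qq t0).rep G = 1 := by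
        simp [hG, ha1z, ha2z, ha3z, ha4z, ha5z, hmu]
      -- pairing
      have hpX := hpairgen d Q cX G hGhom
      have hpB := hpairgen d qq cB G hGhom
      rw [← hcX] at hpX
      rw [← hcB] at hpB
      have heq2 : (0 : ℂ) = cB t0 * ((d.factorial : ℂ) * 1) := by
        calc (0 : ℂ) = ∑ p, cX p * ((d.factorial : ℂ) * eval (Q p).rep G) :=
              (Finset.sum_eq_zero (fun p _ => by rw [hGQ p, mul_zero, mul_zero])).symm
        _ = coeff 0 (apolar G f) := hpX.symm
        _ = ∑ t', cB t' * ((d.factorial : ℂ) * eval (qq t').rep G) := hpB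
        _ = cB t0 * ((d.factorial : ℂ) * 1) := by
              rw [Finset.sum_eq_single t0]
              · rw [hGz]
              · intro t' _ ht'
                rw [hGB t' ht', mul_zero, mul_zero]
              · intro h
                exact absurd (Finset.mem_univ t0) h
      rw [mul_one] at heq2
      exact hcBne t0 (by
        rcases mul_eq_zero.mp heq2.symm with h | h
        · exact h
        · exact absurd h hdfac)
    have hsub' : B ⊆ Set.range Q := by
      rw [← hqrange]
      rintro p ⟨t, rfl⟩
      exact hsub t
    refine Set.eq_of_subset_of_ncard_le hsub' ?_ (Set.finite_range Q)
    rw [hXcard, hBcard]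
end
end
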